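/- arXiv:2007.12243 — 13 statements merged into one kernel-verified Lean document; each statement's English description precedes it below -/
import Mathlib

section
/- Let F be a field with char F ≠ 2 and let n ≥ 7 be an integer. Then there exists a unital F-subalgebra S of the algebra of n×n matrices over F such that every element of S is an upper triangular matrix, S is a local ring, S is not commutative, and S is centrally essential. -/
/-- A (not necessarily unital) ring is *centrally essential* if either it is commutative, or
for every non-central element `a` there exist nonzero central elements `x`, `y` with
`a * x = y`. -/
def IsCentrallyEssential (R : Type*) [NonUnitalNonAssocRing R] : Prop :=
  (∀ a b : R, a * b = b * a) ∨
    ∀ a : R, ¬ (∀ b : R, a * b = b * a) →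
      ∃ x y : R, (∀ b : R, x * b = b * x) ∧ (∀ b : R, y * b = b * y) ∧
        x ≠ 0 ∧ y ≠ 0 ∧ a * x = y

namespace CEX

variable {F : Type*} [Field F] {n : ℕ}

def E (hn : 7 ≤ n) (k l : ℕ) (hk : k < 7) (hl : l < 7) (r : F) : Matrix (Fin n) (Fin n) F :=
  Matrix.single ⟨k, by omega⟩ ⟨l, by omega⟩ r

lemma E_mul (hn : 7 ≤ n) {k l k' l' : ℕ} (hk : k < 7) (hl : l < 7) (hk' : k' < 7)
    (hl' : l' < 7) (a b : F) :
    E hn k l hk hl a * E hn k' l' hk' hl' b =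
      if l = k' then E hn k l' hk hl' (a * b) else 0 := by
  by_cases h : l = k'
  · subst h
    rw [if_pos rfl]
    exact Matrix.single_mul_single_same (c := a) (d := b) ..
  · rw [if_neg h]
    exact Matrix.single_mul_single_of_ne (c := a) (h := Fin.ne_of_val_ne h) (d := b) ..

def Xm (hn : 7 ≤ n) : Matrix (Fin n) (Fin n) F :=
  E hn 2 6 (by omega) (by omega) 1 + E hn 1 3 (by omega) (by omega) 1 +
    E hn 0 4 (by omega) (by omega) 1

def Ym (hn : 7 ≤ n) : Matrix (Fin n) (Fin n) F :=
  E hn 3 6 (by omega) (by omega) 1 - E hn 1 2 (by omega) (by omega) 1 +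
    E hn 0 5 (by omega) (by omega) 1

def Zm (hn : 7 ≤ n) : Matrix (Fin n) (Fin n) F :=
  E hn 1 6 (by omega) (by omega) 1

def S1m (hn : 7 ≤ n) : Matrix (Fin n) (Fin n) F :=
  E hn 4 6 (by omega) (by omega) 1 + E hn 0 2 (by omega) (by omega) 1

def S2m (hn : 7 ≤ n) : Matrix (Fin n) (Fin n) F :=
  E hn 5 6 (by omega) (by omega) 1 + E hn 0 3 (by omega) (by omega) 1

def Tm (hn : 7 ≤ n) : Matrix (Fin n) (Fin n) F :=
  E hn 0 6 (by omega) (by omega) 1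

lemma mulXX (hn : 7 ≤ n) : (Xm hn : Matrix (Fin n) (Fin n) F) * Xm hn = 0 := by
  simp [Xm, Ym, Zm, S1m, S2m, Tm, add_mul, mul_add, sub_mul, mul_sub, E_mul]

lemma mulXY (hn : 7 ≤ n) : (Xm hn : Matrix (Fin n) (Fin n) F) * Ym hn = Zm hn := by
  simp [Xm, Ym, Zm, S1m, S2m, Tm, add_mul, mul_add, sub_mul, mul_sub, E_mul]

lemma mulXZ (hn : 7 ≤ n) : (Xm hn : Matrix (Fin n) (Fin n) F) * Zm hn = 0 := by
  simp [Xm, Ym, Zm, S1m, S2m, Tm, add_mul, mul_add, sub_mul, mul_sub, E_mul]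

lemma mulXS1 (hn : 7 ≤ n) : (Xm hn : Matrix (Fin n) (Fin n) F) * S1m hn = Tm hn := by
  simp [Xm, Ym, Zm, S1m, S2m, Tm, add_mul, mul_add, sub_mul, mul_sub, E_mul]

lemma mulXS2 (hn : 7 ≤ n) : (Xm hn : Matrix (Fin n) (Fin n) F) * S2m hn = 0 := by
  simp [Xm, Ym, Zm, S1m, S2m, Tm, add_mul, mul_add, sub_mul, mul_sub, E_mul]

lemma mulXT (hn : 7 ≤ n) : (Xm hn : Matrix (Fin n) (Fin n) F) * Tm hn = 0 := by
  simp [Xm, Ym, Zm, S1m, S2m, Tm, add_mul, mul_add, sub_mul, mul_sub, E_mul]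

lemma mulYX (hn : 7 ≤ n) : (Ym hn : Matrix (Fin n) (Fin n) F) * Xm hn = -(Zm hn) := by
  simp [Xm, Ym, Zm, S1m, S2m, Tm, add_mul, mul_add, sub_mul, mul_sub, E_mul]

lemma mulYY (hn : 7 ≤ n) : (Ym hn : Matrix (Fin n) (Fin n) F) * Ym hn = 0 := by
  simp [Xm, Ym, Zm, S1m, S2m, Tm, add_mul, mul_add, sub_mul, mul_sub, E_mul]

lemma mulYZ (hn : 7 ≤ n) : (Ym hn : Matrix (Fin n) (Fin n) F) * Zm hn = 0 := by
  simp [Xm, Ym, Zm, S1m, S2m, Tm, add_mul, mul_add, sub_mul, mul_sub, E_mul]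

lemma mulYS1 (hn : 7 ≤ n) : (Ym hn : Matrix (Fin n) (Fin n) F) * S1m hn = 0 := by
  simp [Xm, Ym, Zm, S1m, S2m, Tm, add_mul, mul_add, sub_mul, mul_sub, E_mul]

lemma mulYS2 (hn : 7 ≤ n) : (Ym hn : Matrix (Fin n) (Fin n) F) * S2m hn = Tm hn := by
  simp [Xm, Ym, Zm, S1m, S2m, Tm, add_mul, mul_add, sub_mul, mul_sub, E_mul]

lemma mulYT (hn : 7 ≤ n) : (Ym hn : Matrix (Fin n) (Fin n) F) * Tm hn = 0 := by
  simp [Xm, Ym, Zm, S1m, S2m, Tm, add_mul, mul_add, sub_mul, mul_sub, E_mul]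

lemma mulZX (hn : 7 ≤ n) : (Zm hn : Matrix (Fin n) (Fin n) F) * Xm hn = 0 := by
  simp [Xm, Ym, Zm, S1m, S2m, Tm, add_mul, mul_add, sub_mul, mul_sub, E_mul]

lemma mulZY (hn : 7 ≤ n) : (Zm hn : Matrix (Fin n) (Fin n) F) * Ym hn = 0 := by
  simp [Xm, Ym, Zm, S1m, S2m, Tm, add_mul, mul_add, sub_mul, mul_sub, E_mul]

lemma mulZZ (hn : 7 ≤ n) : (Zm hn : Matrix (Fin n) (Fin n) F) * Zm hn = 0 := by
  simp [Xm, Ym, Zm, S1m, S2m, Tm, add_mul, mul_add, sub_mul, mul_sub, E_mul]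

lemma mulZS1 (hn : 7 ≤ n) : (Zm hn : Matrix (Fin n) (Fin n) F) * S1m hn = 0 := by
  simp [Xm, Ym, Zm, S1m, S2m, Tm, add_mul, mul_add, sub_mul, mul_sub, E_mul]

lemma mulZS2 (hn : 7 ≤ n) : (Zm hn : Matrix (Fin n) (Fin n) F) * S2m hn = 0 := by
  simp [Xm, Ym, Zm, S1m, S2m, Tm, add_mul, mul_add, sub_mul, mul_sub, E_mul]

lemma mulZT (hn : 7 ≤ n) : (Zm hn : Matrix (Fin n) (Fin n) F) * Tm hn = 0 := by
  simp [Xm, Ym, Zm, S1m, S2m, Tm, add_mul, mul_add, sub_mul, mul_sub, E_mul]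

lemma mulS1X (hn : 7 ≤ n) : (S1m hn : Matrix (Fin n) (Fin n) F) * Xm hn = Tm hn := by
  simp [Xm, Ym, Zm, S1m, S2m, Tm, add_mul, mul_add, sub_mul, mul_sub, E_mul]

lemma mulS1Y (hn : 7 ≤ n) : (S1m hn : Matrix (Fin n) (Fin n) F) * Ym hn = 0 := by
  simp [Xm, Ym, Zm, S1m, S2m, Tm, add_mul, mul_add, sub_mul, mul_sub, E_mul]

lemma mulS1Z (hn : 7 ≤ n) : (S1m hn : Matrix (Fin n) (Fin n) F) * Zm hn = 0 := by
  simp [Xm, Ym, Zm, S1m, S2m, Tm, add_mul, mul_add, sub_mul, mul_sub, E_mul]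

lemma mulS1S1 (hn : 7 ≤ n) : (S1m hn : Matrix (Fin n) (Fin n) F) * S1m hn = 0 := by
  simp [Xm, Ym, Zm, S1m, S2m, Tm, add_mul, mul_add, sub_mul, mul_sub, E_mul]

lemma mulS1S2 (hn : 7 ≤ n) : (S1m hn : Matrix (Fin n) (Fin n) F) * S2m hn = 0 := by
  simp [Xm, Ym, Zm, S1m, S2m, Tm, add_mul, mul_add, sub_mul, mul_sub, E_mul]

lemma mulS1T (hn : 7 ≤ n) : (S1m hn : Matrix (Fin n) (Fin n) F) * Tm hn = 0 := by
  simp [Xm, Ym, Zm, S1m, S2m, Tm, add_mul, mul_add, sub_mul, mul_sub, E_mul]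

lemma mulS2X (hn : 7 ≤ n) : (S2m hn : Matrix (Fin n) (Fin n) F) * Xm hn = 0 := by
  simp [Xm, Ym, Zm, S1m, S2m, Tm, add_mul, mul_add, sub_mul, mul_sub, E_mul]

lemma mulS2Y (hn : 7 ≤ n) : (S2m hn : Matrix (Fin n) (Fin n) F) * Ym hn = Tm hn := by
  simp [Xm, Ym, Zm, S1m, S2m, Tm, add_mul, mul_add, sub_mul, mul_sub, E_mul]

lemma mulS2Z (hn : 7 ≤ n) : (S2m hn : Matrix (Fin n) (Fin n) F) * Zm hn = 0 := by
  simp [Xm, Ym, Zm, S1m, S2m, Tm, add_mul, mul_add, sub_mul, mul_sub, E_mul]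

lemma mulS2S1 (hn : 7 ≤ n) : (S2m hn : Matrix (Fin n) (Fin n) F) * S1m hn = 0 := by
  simp [Xm, Ym, Zm, S1m, S2m, Tm, add_mul, mul_add, sub_mul, mul_sub, E_mul]

lemma mulS2S2 (hn : 7 ≤ n) : (S2m hn : Matrix (Fin n) (Fin n) F) * S2m hn = 0 := by
  simp [Xm, Ym, Zm, S1m, S2m, Tm, add_mul, mul_add, sub_mul, mul_sub, E_mul]

lemma mulS2T (hn : 7 ≤ n) : (S2m hn : Matrix (Fin n) (Fin n) F) * Tm hn = 0 := by
  simp [Xm, Ym, Zm, S1m, S2m, Tm, add_mul, mul_add, sub_mul, mul_sub, E_mul]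

lemma mulTX (hn : 7 ≤ n) : (Tm hn : Matrix (Fin n) (Fin n) F) * Xm hn = 0 := by
  simp [Xm, Ym, Zm, S1m, S2m, Tm, add_mul, mul_add, sub_mul, mul_sub, E_mul]

lemma mulTY (hn : 7 ≤ n) : (Tm hn : Matrix (Fin n) (Fin n) F) * Ym hn = 0 := by
  simp [Xm, Ym, Zm, S1m, S2m, Tm, add_mul, mul_add, sub_mul, mul_sub, E_mul]

lemma mulTZ (hn : 7 ≤ n) : (Tm hn : Matrix (Fin n) (Fin n) F) * Zm hn = 0 := by
  simp [Xm, Ym, Zm, S1m, S2m, Tm, add_mul, mul_add, sub_mul, mul_sub, E_mul]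

lemma mulTS1 (hn : 7 ≤ n) : (Tm hn : Matrix (Fin n) (Fin n) F) * S1m hn = 0 := by
  simp [Xm, Ym, Zm, S1m, S2m, Tm, add_mul, mul_add, sub_mul, mul_sub, E_mul]

lemma mulTS2 (hn : 7 ≤ n) : (Tm hn : Matrix (Fin n) (Fin n) F) * S2m hn = 0 := by
  simp [Xm, Ym, Zm, S1m, S2m, Tm, add_mul, mul_add, sub_mul, mul_sub, E_mul]

lemma mulTT (hn : 7 ≤ n) : (Tm hn : Matrix (Fin n) (Fin n) F) * Tm hn = 0 := by
  simp [Xm, Ym, Zm, S1m, S2m, Tm, add_mul, mul_add, sub_mul, mul_sub, E_mul]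

def phi (hn : 7 ≤ n) (c a b d s u t : F) : Matrix (Fin n) (Fin n) F :=
  c • 1 + a • Xm hn + b • Ym hn + d • Zm hn + s • S1m hn + u • S2m hn + t • Tm hn

lemma phi_congr (hn : 7 ≤ n) {c a b d s u t c' a' b' d' s' u' t' : F}
    (h1 : c = c') (h2 : a = a') (h3 : b = b') (h4 : d = d') (h5 : s = s')
    (h6 : u = u') (h7 : t = t') :
    phi hn c a b d s u t = phi hn c' a' b' d' s' u' t' := by
  subst_vars; rfl

lemma phi_one (hn : 7 ≤ n) : phi hn (1 : F) 0 0 0 0 0 0 = 1 := by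
  simp [phi]

lemma phi_zero (hn : 7 ≤ n) : phi hn (0 : F) 0 0 0 0 0 0 = 0 := by
  simp [phi]

lemma phi_scalar (hn : 7 ≤ n) (r : F) : phi hn r 0 0 0 0 0 0 = r • (1 : Matrix (Fin n) (Fin n) F) := by
  simp [phi]

lemma phi_add (hn : 7 ≤ n) (c a b d s u t c' a' b' d' s' u' t' : F) :
    phi hn c a b d s u t + phi hn c' a' b' d' s' u' t' =
      phi hn (c + c') (a + a') (b + b') (d + d') (s + s') (u + u') (t + t') := by
  simp only [phi]
  module

lemma phi_mul (hn : 7 ≤ n) (c a b d s u t c' a' b' d' s' u' t' : F) :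
    phi hn c a b d s u t * phi hn c' a' b' d' s' u' t' =
      phi hn (c * c') (c * a' + a * c') (c * b' + b * c')
        (c * d' + d * c' + a * b' - b * a') (c * s' + s * c') (c * u' + u * c')
        (c * t' + t * c' + a * s' + s * a' + b * u' + u * b') := by
  simp only [phi, add_mul, mul_add, smul_mul_assoc, mul_smul_comm, smul_smul, one_mul, mul_one,
    mulXX, mulXY, mulXZ, mulXS1, mulXS2, mulXT, mulYX, mulYY, mulYZ, mulYS1, mulYS2, mulYT,
    mulZX, mulZY, mulZZ, mulZS1, mulZS2, mulZT, mulS1X, mulS1Y, mulS1Z, mulS1S1, mulS1S2, mulS1T,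
    mulS2X, mulS2Y, mulS2Z, mulS2S1, mulS2S2, mulS2T, mulTX, mulTY, mulTZ, mulTS1, mulTS2, mulTT,
    smul_zero, add_zero, zero_add, smul_neg]
  match_scalars <;> ring

lemma E_apply (hn : 7 ≤ n) (k l : ℕ) (hk : k < 7) (hl : l < 7) (r : F) {p q : ℕ}
    (hp : p < n) (hq : q < n) :
    E hn k l hk hl r ⟨p, hp⟩ ⟨q, hq⟩ = if k = p ∧ l = q then r else 0 := by
  rw [E, Matrix.single, Matrix.of_apply]
  simp [Fin.ext_iff]

lemma E_lower (hn : 7 ≤ n) {k l : ℕ} (hk : k < 7) (hl : l < 7) (hkl : k < l) (r : F)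
    {i j : Fin n} (hij : j < i) : E hn k l hk hl r i j = 0 := by
  rw [E, Matrix.single, Matrix.of_apply, if_neg]
  rintro ⟨h1, h2⟩
  have e1 : k = (i : ℕ) := congrArg Fin.val h1
  have e2 : l = (j : ℕ) := congrArg Fin.val h2
  have hij' : (j : ℕ) < (i : ℕ) := hij
  omega

lemma phi_66 (hn : 7 ≤ n) (c a b d s u t : F) (h6 : 6 < n) :
    phi hn c a b d s u t ⟨6, h6⟩ ⟨6, h6⟩ = c := by
  simp [phi, Xm, Ym, Zm, S1m, S2m, Tm, E_apply, Matrix.one_apply]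

lemma phi_16 (hn : 7 ≤ n) (c a b d s u t : F) (h1 : 1 < n) (h6 : 6 < n) :
    phi hn c a b d s u t ⟨1, h1⟩ ⟨6, h6⟩ = d := by
  simp [phi, Xm, Ym, Zm, S1m, S2m, Tm, E_apply, Matrix.one_apply, Fin.ext_iff]

lemma phi_06 (hn : 7 ≤ n) (c a b d s u t : F) (h0 : 0 < n) (h6 : 6 < n) :
    phi hn c a b d s u t ⟨0, h0⟩ ⟨6, h6⟩ = t := by
  simp [phi, Xm, Ym, Zm, S1m, S2m, Tm, E_apply, Matrix.one_apply, Fin.ext_iff]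

lemma phi_46 (hn : 7 ≤ n) (c a b d s u t : F) (h4 : 4 < n) (h6 : 6 < n) :
    phi hn c a b d s u t ⟨4, h4⟩ ⟨6, h6⟩ = s := by
  simp [phi, Xm, Ym, Zm, S1m, S2m, Tm, E_apply, Matrix.one_apply, Fin.ext_iff]

lemma phi_56 (hn : 7 ≤ n) (c a b d s u t : F) (h5 : 5 < n) (h6 : 6 < n) :
    phi hn c a b d s u t ⟨5, h5⟩ ⟨6, h6⟩ = u := by
  simp [phi, Xm, Ym, Zm, S1m, S2m, Tm, E_apply, Matrix.one_apply, Fin.ext_iff]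

lemma phi_lower (hn : 7 ≤ n) (c a b d s u t : F) {i j : Fin n} (hij : j < i) :
    phi hn c a b d s u t i j = 0 := by
  have hne : i ≠ j := hij.ne'
  simp [phi, Xm, Ym, Zm, S1m, S2m, Tm, Matrix.one_apply_ne hne, E_lower, hij]

lemma phi_central (hn : 7 ≤ n) (c d s u t c' a' b' d' s' u' t' : F) :
    phi hn c 0 0 d s u t * phi hn c' a' b' d' s' u' t' =
      phi hn c' a' b' d' s' u' t' * phi hn c 0 0 d s u t := by
  rw [phi_mul, phi_mul]
  apply phi_congr <;> ring

def Ssub (hn : 7 ≤ n) : Subalgebra F (Matrix (Fin n) (Fin n) F) where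
  carrier := {M | ∃ c a b d s u t : F, M = phi hn c a b d s u t}
  mul_mem' := by
    rintro M N ⟨c, a, b, d, s, u, t, rfl⟩ ⟨c', a', b', d', s', u', t', rfl⟩
    exact ⟨_, _, _, _, _, _, _, phi_mul hn c a b d s u t c' a' b' d' s' u' t'⟩
  one_mem' := ⟨1, 0, 0, 0, 0, 0, 0, (phi_one hn).symm⟩
  add_mem' := by
    rintro M N ⟨c, a, b, d, s, u, t, rfl⟩ ⟨c', a', b', d', s', u', t', rfl⟩
    exact ⟨_, _, _, _, _, _, _, phi_add hn c a b d s u t c' a' b' d' s' u' t'⟩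
  zero_mem' := ⟨0, 0, 0, 0, 0, 0, 0, (phi_zero hn).symm⟩
  algebraMap_mem' := by
    intro r
    refine ⟨r, 0, 0, 0, 0, 0, 0, ?_⟩
    rw [Algebra.algebraMap_eq_smul_one, phi_scalar]

lemma mem_Ssub (hn : 7 ≤ n) {M : Matrix (Fin n) (Fin n) F} :
    M ∈ Ssub hn ↔ ∃ c a b d s u t : F, M = phi hn c a b d s u t := Iff.rfl

lemma isUnit_of_coeff (hn : 7 ≤ n) {c a b d s u t : F} (hc : c ≠ 0)
    (hm : phi hn c a b d s u t ∈ Ssub hn) :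
    IsUnit (⟨phi hn c a b d s u t, hm⟩ : Ssub hn) := by
  have hci : c * c⁻¹ = 1 := mul_inv_cancel₀ hc
  refine ⟨⟨⟨phi hn c a b d s u t, hm⟩,
    ⟨phi hn c⁻¹ (-(a*c⁻¹*c⁻¹)) (-(b*c⁻¹*c⁻¹)) (-(d*c⁻¹*c⁻¹)) (-(s*c⁻¹*c⁻¹)) (-(u*c⁻¹*c⁻¹))
        ((2*a*s + 2*b*u)*(c⁻¹*c⁻¹*c⁻¹) - t*(c⁻¹*c⁻¹)),
      (mem_Ssub hn).mpr ⟨_, _, _, _, _, _, _, rfl⟩⟩, ?_, ?_⟩, rfl⟩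
  · apply Subtype.ext
    show phi hn c a b d s u t * phi hn _ _ _ _ _ _ _ = 1
    rw [phi_mul, ← phi_one hn]
    apply phi_congr
    · linear_combination hci
    · linear_combination (-(a*c⁻¹)) * hci
    · linear_combination (-(b*c⁻¹)) * hci
    · linear_combination (-(d*c⁻¹)) * hci
    · linear_combination (-(s*c⁻¹)) * hci
    · linear_combination (-(u*c⁻¹)) * hci
    · linear_combination ((2*a*s + 2*b*u)*(c⁻¹*c⁻¹) - t*c⁻¹) * hci
  · apply Subtype.ext
    show phi hn _ _ _ _ _ _ _ * phi hn c a b d s u t = 1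
    rw [phi_mul, ← phi_one hn]
    apply phi_congr
    · linear_combination hci
    · linear_combination (-(a*c⁻¹)) * hci
    · linear_combination (-(b*c⁻¹)) * hci
    · linear_combination (-(d*c⁻¹)) * hci
    · linear_combination (-(s*c⁻¹)) * hci
    · linear_combination (-(u*c⁻¹)) * hci
    · linear_combination ((2*a*s + 2*b*u)*(c⁻¹*c⁻¹) - t*c⁻¹) * hci

end CEX

/-- For any field `F` of characteristic `≠ 2` and any `n ≥ 7`, there is a unital `F`-subalgebra
of the `n × n` matrices consisting of upper triangular matrices which is local,
non-commutative and centrally essential. -/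
theorem exists_local_noncommutative_centrallyEssential_subalgebra
    (F : Type*) [Field F] (hF : ringChar F ≠ 2) (n : ℕ) (hn : 7 ≤ n) :
    ∃ S : Subalgebra F (Matrix (Fin n) (Fin n) F),
      (∀ A ∈ S, ∀ i j : Fin n, j < i → A i j = 0) ∧
      IsLocalRing S ∧
      ¬ (∀ a b : S, a * b = b * a) ∧
      IsCentrallyEssential S := by
  classical
  have h2 : (2 : F) ≠ 0 := by
    intro h
    have hdvd : ringChar F ∣ 2 := (ringChar.spec F 2).mp (by exact_mod_cast h)
    rcases (Nat.dvd_prime Nat.prime_two).mp hdvd with h1 | h1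
    · have h10 : ((1 : ℕ) : F) = 0 := (ringChar.spec F 1).mpr (by rw [h1])
      simpa using h10
    · exact hF h1
  have h0n : 0 < n := by omega
  have h1n : 1 < n := by omega
  have h4n : 4 < n := by omega
  have h5n : 5 < n := by omega
  have h6n : 6 < n := by omega
  refine ⟨CEX.Ssub hn, ?_, ?_, ?_, ?_⟩
  · intro A hA i j hij
    obtain ⟨c, a, b, d, s, u, t, rfl⟩ := (CEX.mem_Ssub hn).mp hA
    exact CEX.phi_lower hn c a b d s u t hij
  · haveI : Nontrivial (CEX.Ssub (F := F) hn) := by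
      refine nontrivial_of_ne 1 0 fun h => ?_
      have h' : (1 : Matrix (Fin n) (Fin n) F) = 0 := congrArg Subtype.val h
      have h'' := congrFun (congrFun h' ⟨0, h0n⟩) ⟨0, h0n⟩
      simpa using h''
    refine { isUnit_or_isUnit_of_add_one := ?_ }
    rintro ⟨M, hM⟩ ⟨N, hN⟩ hab
    obtain ⟨c, a, b, d, s, u, t, rfl⟩ := (CEX.mem_Ssub hn).mp hM
    obtain ⟨c', a', b', d', s', u', t', rfl⟩ := (CEX.mem_Ssub hn).mp hN
    have hval : CEX.phi hn c a b d s u t + CEX.phi hn c' a' b' d' s' u' t' =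
        (1 : Matrix (Fin n) (Fin n) F) := congrArg Subtype.val hab
    rw [CEX.phi_add hn, ← CEX.phi_one hn] at hval
    have hcc := congrFun (congrFun hval ⟨6, h6n⟩) ⟨6, h6n⟩
    rw [CEX.phi_66, CEX.phi_66] at hcc
    by_cases hc : c = 0
    · right
      have hc' : c' ≠ 0 := by
        intro h'
        rw [hc, h'] at hcc
        simp at hcc
      exact CEX.isUnit_of_coeff hn hc' hN
    · left
      exact CEX.isUnit_of_coeff hn hc hM
  · intro h
    have hxy := h ⟨CEX.phi hn 0 1 0 0 0 0 0, (CEX.mem_Ssub hn).mpr ⟨0,1,0,0,0,0,0, rfl⟩⟩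
      ⟨CEX.phi hn 0 0 1 0 0 0 0, (CEX.mem_Ssub hn).mpr ⟨0,0,1,0,0,0,0, rfl⟩⟩
    have hval : CEX.phi hn (0:F) 1 0 0 0 0 0 * CEX.phi hn 0 0 1 0 0 0 0 =
        CEX.phi hn (0:F) 0 1 0 0 0 0 * CEX.phi hn 0 1 0 0 0 0 0 := congrArg Subtype.val hxy
    rw [CEX.phi_mul, CEX.phi_mul] at hval
    have h16 := congrFun (congrFun hval ⟨1, h1n⟩) ⟨6, h6n⟩
    rw [CEX.phi_16, CEX.phi_16] at h16
    exact h2 (by linear_combination h16)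
  · right
    rintro ⟨M, hM⟩ hnc
    obtain ⟨c, a, b, d, s, u, t, rfl⟩ := (CEX.mem_Ssub hn).mp hM
    have hab : ¬(a = 0 ∧ b = 0) := by
      rintro ⟨rfl, rfl⟩
      apply hnc
      rintro ⟨N, hN⟩
      obtain ⟨c', a', b', d', s', u', t', rfl⟩ := (CEX.mem_Ssub hn).mp hN
      exact Subtype.ext (CEX.phi_central hn c d s u t c' a' b' d' s' u' t')
    by_cases hc : c = 0
    · subst hc
      by_cases ha : a = 0
      · subst ha
        have hb : b ≠ 0 := fun hb => hab ⟨rfl, hb⟩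
        refine ⟨⟨CEX.phi hn 0 0 0 0 0 1 0, (CEX.mem_Ssub hn).mpr ⟨0,0,0,0,0,1,0, rfl⟩⟩,
          ⟨CEX.phi hn 0 0 0 0 0 0 b, (CEX.mem_Ssub hn).mpr ⟨0,0,0,0,0,0,b, rfl⟩⟩,
          ?_, ?_, ?_, ?_, ?_⟩
        · rintro ⟨N, hN⟩
          obtain ⟨c', a', b', d', s', u', t', rfl⟩ := (CEX.mem_Ssub hn).mp hN
          exact Subtype.ext (CEX.phi_central hn 0 0 0 1 0 c' a' b' d' s' u' t')
        · rintro ⟨N, hN⟩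
          obtain ⟨c', a', b', d', s', u', t', rfl⟩ := (CEX.mem_Ssub hn).mp hN
          exact Subtype.ext (CEX.phi_central hn 0 0 0 0 b c' a' b' d' s' u' t')
        · intro hx0
          have h' : CEX.phi hn (0:F) 0 0 0 0 1 0 = 0 := congrArg Subtype.val hx0
          have h'' := congrFun (congrFun h' ⟨5, h5n⟩) ⟨6, h6n⟩
          rw [CEX.phi_56] at h''
          simpa using h''
        · intro hy0
          have h' : CEX.phi hn (0:F) 0 0 0 0 0 b = 0 := congrArg Subtype.val hy0
          have h'' := congrFun (congrFun h' ⟨0, h0n⟩) ⟨6, h6n⟩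
          rw [CEX.phi_06] at h''
          exact hb (by simpa using h'')
        · apply Subtype.ext
          show CEX.phi hn (0:F) 0 b d s u t * CEX.phi hn 0 0 0 0 0 1 0 =
            CEX.phi hn (0:F) 0 0 0 0 0 b
          rw [CEX.phi_mul]
          apply CEX.phi_congr <;> ring
      · refine ⟨⟨CEX.phi hn 0 0 0 0 1 0 0, (CEX.mem_Ssub hn).mpr ⟨0,0,0,0,1,0,0, rfl⟩⟩,
          ⟨CEX.phi hn 0 0 0 0 0 0 a, (CEX.mem_Ssub hn).mpr ⟨0,0,0,0,0,0,a, rfl⟩⟩,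
          ?_, ?_, ?_, ?_, ?_⟩
        · rintro ⟨N, hN⟩
          obtain ⟨c', a', b', d', s', u', t', rfl⟩ := (CEX.mem_Ssub hn).mp hN
          exact Subtype.ext (CEX.phi_central hn 0 0 1 0 0 c' a' b' d' s' u' t')
        · rintro ⟨N, hN⟩
          obtain ⟨c', a', b', d', s', u', t', rfl⟩ := (CEX.mem_Ssub hn).mp hN
          exact Subtype.ext (CEX.phi_central hn 0 0 0 0 a c' a' b' d' s' u' t')
        · intro hx0
          have h' : CEX.phi hn (0:F) 0 0 0 1 0 0 = 0 := congrArg Subtype.val hx0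
          have h'' := congrFun (congrFun h' ⟨4, h4n⟩) ⟨6, h6n⟩
          rw [CEX.phi_46] at h''
          simpa using h''
        · intro hy0
          have h' : CEX.phi hn (0:F) 0 0 0 0 0 a = 0 := congrArg Subtype.val hy0
          have h'' := congrFun (congrFun h' ⟨0, h0n⟩) ⟨6, h6n⟩
          rw [CEX.phi_06] at h''
          exact ha (by simpa using h'')
        · apply Subtype.ext
          show CEX.phi hn (0:F) a b d s u t * CEX.phi hn 0 0 0 0 1 0 0 =
            CEX.phi hn (0:F) 0 0 0 0 0 a
          rw [CEX.phi_mul]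
          apply CEX.phi_congr <;> ring
    · refine ⟨⟨CEX.phi hn 0 0 0 0 0 0 1, (CEX.mem_Ssub hn).mpr ⟨0,0,0,0,0,0,1, rfl⟩⟩,
        ⟨CEX.phi hn 0 0 0 0 0 0 c, (CEX.mem_Ssub hn).mpr ⟨0,0,0,0,0,0,c, rfl⟩⟩,
        ?_, ?_, ?_, ?_, ?_⟩
      · rintro ⟨N, hN⟩
        obtain ⟨c', a', b', d', s', u', t', rfl⟩ := (CEX.mem_Ssub hn).mp hN
        exact Subtype.ext (CEX.phi_central hn 0 0 0 0 1 c' a' b' d' s' u' t')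
      · rintro ⟨N, hN⟩
        obtain ⟨c', a', b', d', s', u', t', rfl⟩ := (CEX.mem_Ssub hn).mp hN
        exact Subtype.ext (CEX.phi_central hn 0 0 0 0 c c' a' b' d' s' u' t')
      · intro hx0
        have h' : CEX.phi hn (0:F) 0 0 0 0 0 1 = 0 := congrArg Subtype.val hx0
        have h'' := congrFun (congrFun h' ⟨0, h0n⟩) ⟨6, h6n⟩
        rw [CEX.phi_06] at h''
        simpa using h''
      · intro hy0
        have h' : CEX.phi hn (0:F) 0 0 0 0 0 c = 0 := congrArg Subtype.val hy0
        have h'' := congrFun (congrFun h' ⟨0, h0n⟩) ⟨6, h6n⟩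
        rw [CEX.phi_06] at h''
        exact hc (by simpa using h'')
      · apply Subtype.ext
        show CEX.phi hn c a b d s u t * CEX.phi hn 0 0 0 0 0 0 1 =
          CEX.phi hn (0:F) 0 0 0 0 0 c
        rw [CEX.phi_mul]
        apply CEX.phi_congr <;> ring
end

section
/- Let F be a field and n ≥ 2 an integer. Then neither the full matrix ring M_n(F) of all n×n matrices over F nor the ring T_n(F) of upper triangular n×n matrices over F is centrally essential. -/
/-- The unital algebra `T_n(F)` of upper triangular `n × n` matrices over `F`. -/
def upperTriangularAlgebra (F : Type*) [CommRing F] (n : ℕ) :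
    Subalgebra F (Matrix (Fin n) (Fin n) F) where
  carrier := {A | ∀ i j : Fin n, j < i → A i j = 0}
  mul_mem' := by
    intro A B ha hb i j hij
    rw [Matrix.mul_apply]
    refine Finset.sum_eq_zero fun k _ => ?_
    rcases le_or_gt i k with h | h
    · rw [hb k j (lt_of_lt_of_le hij h), mul_zero]
    · rw [ha i k h, zero_mul]
  add_mem' := by
    intro A B ha hb i j hij
    simp [Matrix.add_apply, ha i j hij, hb i j hij]
  algebraMap_mem' := by
    intro r i j hij
    rw [Matrix.algebraMap_eq_diagonal]
    exact Matrix.diagonal_apply_ne _ (ne_of_gt hij)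

/-- If a ring has a non-central element, and every nonzero central element has a central
right inverse, then it is not centrally essential. -/
lemma not_isCentrallyEssential_aux {R : Type*} [Ring R] (a : R)
    (ha : ¬ ∀ b : R, a * b = b * a)
    (h : ∀ x : R, (∀ b : R, x * b = b * x) → x ≠ 0 →
      ∃ u : R, (∀ b : R, u * b = b * u) ∧ x * u = 1) :
    ¬ IsCentrallyEssential R := by
  rintro (hc | hce)
  · exact ha fun b => hc a b
  · obtain ⟨x, y, hx, hy, hx0, hy0, hxy⟩ := hce a ha
    obtain ⟨u, hu, hxu⟩ := h x hx hx0
    apply ha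
    intro b
    have hay : a = y * u := by rw [← hxy, mul_assoc, hxu, mul_one]
    calc a * b = y * (u * b) := by rw [hay, mul_assoc]
    _ = y * b * u := by rw [hu b, mul_assoc]
    _ = b * (y * u) := by rw [hy b, mul_assoc]
    _ = b * a := by rw [← hay]

/-- For `n ≥ 2`, neither the full matrix ring `M_n(F)` nor the upper triangular matrix ring
`T_n(F)` is centrally essential. -/
theorem matrix_not_centrallyEssential_and_upperTriangular_not_centrallyEssential
    (F : Type*) [Field F] (n : ℕ) (hn : 2 ≤ n) :
    ¬ IsCentrallyEssential (Matrix (Fin n) (Fin n) F) ∧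
    ¬ IsCentrallyEssential (upperTriangularAlgebra F n) := by
  have : NeZero n := ⟨by omega⟩
  set i0 : Fin n := ⟨0, by omega⟩ with hi0
  set i1 : Fin n := ⟨1, by omega⟩ with hi1
  have h01 : i0 ≠ i1 := by simp [hi0, hi1, Fin.ext_iff]
  -- The basic non-commuting pair: E01 * E00 = 0, E00 * E01 = E01 ≠ 0
  have hE : (Matrix.single i0 i1 (1 : F)) * Matrix.single i0 i0 1 = 0 :=
    Matrix.single_mul_single_of_ne (c := 1) i0 i1 i0 h01.symm 1
  have hE' : (Matrix.single i0 i0 (1 : F)) * Matrix.single i0 i1 1 =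
      Matrix.single i0 i1 1 := by
    rw [Matrix.single_mul_single_same, one_mul]
  have hEne : (Matrix.single i0 i1 (1 : F)) ≠ 0 := by
    intro h
    have := congrFun (congrFun h i0) i1
    simp at this
  constructor
  · -- full matrix ring
    refine not_isCentrallyEssential_aux (Matrix.single i0 i1 1) ?_ ?_
    · intro hcomm
      have := hcomm (Matrix.single i0 i0 1)
      rw [hE, hE'] at this
      exact hEne this.symm
    · intro x hx hx0
      obtain ⟨c, rfl⟩ := Matrix.mem_range_scalar_of_commute_single
        (fun i j _ => (hx _).symm)
      have hc : c ≠ 0 := by rintro rfl; simp at hx0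
      refine ⟨Matrix.scalar (Fin n) c⁻¹, fun b => ?_, ?_⟩
      · rw [Matrix.scalar_commute c⁻¹ (fun r => mul_comm _ _) b]
      · rw [← map_mul, mul_inv_cancel₀ hc, map_one]
  · -- upper triangular ring
    -- memberships
    have hmem01 : Matrix.single i0 i1 (1 : F) ∈ upperTriangularAlgebra F n := by
      intro i j hij
      rw [Matrix.single_apply_of_ne]
      rintro ⟨rfl, rfl⟩
      exact absurd hij (by simp [hi0, hi1, Fin.lt_iff_val_lt_val])
    have hmem00 : Matrix.single i0 i0 (1 : F) ∈ upperTriangularAlgebra F n := by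
      intro i j hij
      rw [Matrix.single_apply_of_ne]
      rintro ⟨rfl, rfl⟩
      exact lt_irrefl _ hij
    have hmemE : ∀ k : Fin n, Matrix.single i0 k (1 : F) ∈
        upperTriangularAlgebra F n := by
      intro k i j hij
      rw [Matrix.single_apply_of_ne]
      rintro ⟨rfl, rfl⟩
      exact absurd hij (by simp [hi0, Fin.lt_iff_val_lt_val])
    have hmemD : ∀ k : Fin n, Matrix.single k k (1 : F) ∈
        upperTriangularAlgebra F n := by
      intro k i j hij
      rw [Matrix.single_apply_of_ne]
      rintro ⟨rfl, rfl⟩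
      exact lt_irrefl _ hij
    set a : upperTriangularAlgebra F n := ⟨_, hmem01⟩ with ha
    refine not_isCentrallyEssential_aux a ?_ ?_
    · intro hcomm
      have := congrArg Subtype.val (hcomm ⟨_, hmem00⟩)
      simp only [ha, Submonoid.mk_mul_mk, MulMemClass.mk_mul_mk] at this
      rw [hE, hE'] at this
      exact hEne this.symm
    · intro x hx hx0
      -- x is a scalar matrix
      have hdiagcomm : ∀ k : Fin n, (x : Matrix (Fin n) (Fin n) F) * Matrix.single k k 1 =
          Matrix.single k k 1 * (x : Matrix (Fin n) (Fin n) F) := fun k =>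
        congrArg Subtype.val (hx ⟨_, hmemD k⟩)
      have hoff : ∀ i j : Fin n, i ≠ j → (x : Matrix (Fin n) (Fin n) F) i j = 0 := by
        intro i j hij
        have := congrFun (congrFun (hdiagcomm j) i) j
        simp [hij] at this
        exact this
      have hdiag : ∀ k : Fin n, (x : Matrix (Fin n) (Fin n) F) k k =
          (x : Matrix (Fin n) (Fin n) F) i0 i0 := by
        intro k
        rcases eq_or_ne k i0 with rfl | hk
        · rfl
        · have hcm := congrArg Subtype.val (hx ⟨_, hmemE k⟩)
          have h2 := congrFun (congrFun hcm i0) k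
          have h3 : (x : Matrix (Fin n) (Fin n) F) i0 i0 =
              (x : Matrix (Fin n) (Fin n) F) k k := by simpa using h2
          exact h3.symm
      obtain ⟨c, hvc⟩ : ∃ c, (x : Matrix (Fin n) (Fin n) F) = Matrix.scalar (Fin n) c := by
        refine ⟨(x : Matrix (Fin n) (Fin n) F) i0 i0, ?_⟩
        ext i j
        rcases eq_or_ne i j with rfl | hij
        · simp [Matrix.scalar_apply, hdiag i]
        · simp [Matrix.scalar_apply, Matrix.diagonal_apply_ne _ hij, hoff i j hij]
      have hc : c ≠ 0 := by
        rintro rfl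
        exact hx0 (Subtype.ext (by simp [hvc]))
      have hmemu : Matrix.scalar (Fin n) c⁻¹ ∈ upperTriangularAlgebra F n := by
        intro i j hij
        simp [Matrix.scalar_apply, Matrix.diagonal_apply_ne _ (ne_of_gt hij)]
      refine ⟨⟨Matrix.scalar (Fin n) c⁻¹, hmemu⟩, ?_, ?_⟩
      · intro b
        apply Subtype.ext
        show Matrix.scalar (Fin n) c⁻¹ * (b : Matrix (Fin n) (Fin n) F) =
          (b : Matrix (Fin n) (Fin n) F) * Matrix.scalar (Fin n) c⁻¹
        exact Matrix.scalar_commute c⁻¹ (fun r => Commute.all _ _) _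
      · apply Subtype.ext
        show (x : Matrix (Fin n) (Fin n) F) * Matrix.scalar (Fin n) c⁻¹ = 1
        rw [hvc, ← map_mul, mul_inv_cancel₀ hc, map_one]
end

section
/- Let R be a (not necessarily unital) ring which is centrally essential and whose center Z(R) is a semiprime ring, i.e., Z(R) contains no nonzero element x with x² = 0 (Z(R) is reduced). Then R is commutative. -/
/-- A centrally essential ring whose center is reduced (no nonzero central element of
square zero) is commutative. -/
theorem commutative_of_centrallyEssential_of_center_reduced
    (R : Type*) [NonUnitalRing R] (hce : IsCentrallyEssential R)
    (hred : ∀ x : R, (∀ b : R, x * b = b * x) → x * x = 0 → x = 0) :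
    ∀ a b : R, a * b = b * a := by
  rcases hce with h | hce
  · exact h
  intro a b
  by_contra hab
  -- Lemma A: if x and a*x are central then x kills all commutators of a.
  have key : ∀ x : R, (∀ t : R, x * t = t * x) → (∀ t : R, (a * x) * t = t * (a * x)) →
      ∀ b' : R, (a * b' - b' * a) * x = 0 := by
    intro x hx hax b'
    have h1 : (a * b') * x = (a * x) * b' := by
      rw [mul_assoc, ← hx b', ← mul_assoc]
    have h2 : (b' * a) * x = (a * x) * b' := by
      rw [mul_assoc, ← hax b']
    rw [sub_mul, h1, h2, sub_self]
  -- Lemma B: there is no nonzero central c killed (as above) by every suitable x.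
  have lemB : ∀ c : R, (∀ t : R, c * t = t * c) → c ≠ 0 →
      (∀ x : R, (∀ t : R, x * t = t * x) → (∀ t : R, (a * x) * t = t * (a * x)) →
        c * x = 0) → False := by
    intro c hc hc0 hkill
    by_cases hac : ∀ t : R, (a * c) * t = t * (a * c)
    · exact hc0 (hred c hc (hkill c hc hac))
    · obtain ⟨x', y', hx', hy', hx0, hy0, hxy⟩ := hce (a * c) hac
      set u := c * x' with hu
      have huc : ∀ t : R, u * t = t * u := by
        intro t
        rw [hu, mul_assoc, hx' t, ← mul_assoc, hc t, mul_assoc]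
      have hau : a * u = y' := by rw [hu, ← mul_assoc, hxy]
      have haucentral : ∀ t : R, (a * u) * t = t * (a * u) := by
        intro t; rw [hau]; exact hy' t
      have hcu : c * u = 0 := hkill u huc haucentral
      have huu : u * u = 0 := by
        have : u * u = (c * u) * x' := by
          rw [hu]
          rw [show (c * x') * (c * x') = c * (x' * (c * x')) from mul_assoc _ _ _]
          rw [hx' (c * x'), ← mul_assoc]
        rw [this, hcu, zero_mul]
      have hy'sq : y' * y' = 0 := by
        rw [← hau]
        calc (a * u) * (a * u) = a * (u * (a * u)) := by rw [mul_assoc]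
          _ = a * ((a * u) * u) := by rw [huc (a * u)]
          _ = a * (a * (u * u)) := by rw [mul_assoc]
          _ = 0 := by rw [huu, mul_zero, mul_zero]
      exact hy0 (hred y' hy' hy'sq)
  set c := a * b - b * a with hcdef
  have hc0 : c ≠ 0 := sub_ne_zero.mpr hab
  by_cases hc : ∀ t : R, c * t = t * c
  · exact lemB c hc hc0 (fun x hx hax => key x hx hax b)
  · obtain ⟨x₂, y₂, hx₂, hy₂, hx₂0, hy₂0, hxy₂⟩ := hce c hc
    have hy₂comm : y₂ = a * (b * x₂) - (b * x₂) * a := by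
      rw [← hxy₂, hcdef, sub_mul, mul_assoc, mul_assoc, ← hx₂ a, ← mul_assoc, ← mul_assoc b x₂ a]
    exact lemB y₂ hy₂ hy₂0 (fun x hx hax => by
      rw [hy₂comm]; exact key x hx hax (b * x₂))
end

section
/- Let R be a centrally essential (not necessarily unital) ring. Then for every n ∈ ℕ, all elements x₁,…,xₙ, y₁,…,yₙ, r ∈ R and every idempotent e ∈ R (e = e²), the following implication holds: if x₁y₁ + … + xₙyₙ = e and x₁(re)y₁ + … + xₙ(re)yₙ = 0, then re = 0. -/
/-- In a centrally essential ring, if `x₁y₁ + … + xₙyₙ = e` for an idempotent `e` and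
`x₁(re)y₁ + … + xₙ(re)yₙ = 0`, then `re = 0`. -/
theorem centrallyEssential_idempotent_relation
    (R : Type*) [NonUnitalRing R] (hce : IsCentrallyEssential R)
    (n : ℕ) (x y : Fin n → R) (r e : R) (he : e = e * e)
    (h1 : ∑ i, x i * y i = e)
    (h2 : ∑ i, x i * (r * e) * y i = 0) :
    r * e = 0 := by
  -- key computation for a central element in place of `r * e`
  have central_case : ∀ c : R, (∀ b : R, c * b = b * c) →
      (∑ i, x i * c * y i) = e * c := by
    intro c hc
    calc ∑ i, x i * c * y i = ∑ i, (x i * y i) * c := by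
          refine Finset.sum_congr rfl fun i _ => ?_
          rw [mul_assoc, hc, ← mul_assoc, mul_assoc]
      _ = e * c := by rw [← Finset.sum_mul, h1]
  have final : (∀ b : R, (r * e) * b = b * (r * e)) → r * e = 0 := by
    intro hc
    have h3 : e * (r * e) = 0 := (central_case (r * e) hc) ▸ h2
    calc r * e = r * (e * e) := by rw [← he]
      _ = (r * e) * e := by rw [mul_assoc]
      _ = e * (r * e) := hc e
      _ = 0 := h3
  rcases hce with hcomm | hce
  · exact final fun b => hcomm _ _
  · by_cases hcen : ∀ b : R, (r * e) * b = b * (r * e)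
    · exact final hcen
    · obtain ⟨x₀, y₀, hx, hy, hx0, hy0, hax⟩ := hce (r * e) hcen
      exfalso
      apply hy0
      have key : ∑ i, (x i * (r * e) * y i) * x₀ = 0 := by
        rw [← Finset.sum_mul, h2, zero_mul]
      have key2 : ∑ i, (x i * (r * e) * y i) * x₀ = e * y₀ := by
        calc ∑ i, (x i * (r * e) * y i) * x₀ = ∑ i, (x i * y i) * y₀ := by
              refine Finset.sum_congr rfl fun i _ => ?_
              rw [mul_assoc, ← hx (y i), ← mul_assoc, mul_assoc (x i), hax,
                mul_assoc, hy (y i), ← mul_assoc]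
          _ = e * y₀ := by rw [← Finset.sum_mul, h1]
      have hy0e : y₀ * e = y₀ := by
        calc y₀ * e = ((r * e) * x₀) * e := by rw [hax]
          _ = (r * e) * (x₀ * e) := by rw [mul_assoc]
          _ = (r * e) * (e * x₀) := by rw [hx e]
          _ = ((r * e) * e) * x₀ := by noncomm_ring
          _ = (r * (e * e)) * x₀ := by noncomm_ring
          _ = (r * e) * x₀ := by rw [← he]
          _ = y₀ := hax
      calc y₀ = y₀ * e := hy0e.symm
        _ = e * y₀ := hy e
        _ = 0 := by rw [← key2, key]
end

section
/- Every idempotent of a centrally essential (not necessarily unital) ring R is central, i.e., if e ∈ R satisfies e² = e then e ∈ Z(R). -/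
/-- Every idempotent of a centrally essential ring is central. -/
theorem idempotent_central_of_centrallyEssential
    (R : Type*) [NonUnitalRing R] (hce : IsCentrallyEssential R)
    (e : R) (he : e * e = e) :
    ∀ b : R, e * b = b * e := by
  rcases hce with h | h
  · exact fun b => h e b
  -- first: e*c = e*c*e for all c
  have left : ∀ c : R, e * c = e * c * e := by
    intro c
    by_contra hne
    set a := e * c - e * c * e with ha
    have hane : a ≠ 0 := sub_ne_zero.mpr hne
    have hea : e * a = a := by
      rw [ha]; simp only [mul_sub, ← mul_assoc, he]
    have hae : a * e = 0 := by
      rw [ha, sub_mul, mul_assoc (e * c) e e, he, sub_self]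
    have hnc : ¬ ∀ b : R, a * b = b * a := by
      intro hc
      have h1 := hc e
      rw [hae, hea] at h1
      exact hane h1.symm
    obtain ⟨x, y, hx, hy, hx0, hy0, hxy⟩ := h a hnc
    apply hy0
    have h1 : e * y = y := by rw [← hxy, ← mul_assoc, hea]
    have h2 : y * e = 0 := by
      rw [← hxy, mul_assoc, hx e, ← mul_assoc, hae, zero_mul]
    have h3 := hy e
    rw [h2, h1] at h3
    exact h3.symm
  -- second: c*e = e*c*e for all c
  have right : ∀ c : R, c * e = e * c * e := by
    intro c
    by_contra hne
    set a := c * e - e * c * e with ha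
    have hane : a ≠ 0 := sub_ne_zero.mpr hne
    have hea : e * a = 0 := by
      rw [ha]; simp only [mul_sub, ← mul_assoc, he, sub_self]
    have hae : a * e = a := by
      rw [ha, sub_mul, mul_assoc c e e, he, mul_assoc (e * c) e e, he]
    have hnc : ¬ ∀ b : R, a * b = b * a := by
      intro hc
      have h1 := hc e
      rw [hae, hea] at h1
      exact hane h1
    obtain ⟨x, y, hx, hy, hx0, hy0, hxy⟩ := h a hnc
    apply hy0
    have h1 : e * y = 0 := by rw [← hxy, ← mul_assoc, hea, zero_mul]
    have h2 : y * e = y := by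
      rw [← hxy, mul_assoc, hx e, ← mul_assoc, hae]
    have h3 := hy e
    rw [h1, h2] at h3
    exact h3
  intro b
  rw [left b, right b]
end

section
/- Let F be a field, n a positive integer, and S a unital F-subalgebra of the ring T_n(F) of upper triangular n×n matrices over F such that S is a local ring. Then S is centrally essential if and only if the Jacobson radical J(S) of S, regarded as a non-unital ring, is centrally essential. -/
/-- In a (possibly noncommutative) local ring, the Jacobson radical is exactly the nonunits. -/
theorem mem_jacobson_bot_iff_of_local {R : Type*} [Ring R] [IsLocalRing R] (z : R) :
    z ∈ Ideal.jacobson (⊥ : Ideal R) ↔ ¬ IsUnit z := by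
  constructor
  · intro hz hu
    obtain ⟨M, hM⟩ := Ideal.exists_maximal R
    have hzM : z ∈ M := Ideal.mem_sInf.1 hz ⟨bot_le, hM⟩
    exact hM.ne_top (M.eq_top_of_isUnit_mem hzM hu)
  · intro hz
    refine Ideal.mem_sInf.2 ?_
    rintro M ⟨-, hM⟩
    by_contra hzM
    obtain ⟨y, i, hiM, hyz⟩ := hM.exists_inv hzM
    rcases IsLocalRing.isUnit_or_isUnit_of_add_one hyz with hu | hu
    · obtain ⟨u, hu⟩ := hu
      have hvz : ((↑u⁻¹ : R) * y) * z = 1 := by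
        rw [mul_assoc, ← hu]; exact u.inv_mul
      set v : R := (↑u⁻¹ : R) * y
      have hee : (z * v) * (z * v) = z * v := by
        rw [mul_assoc z v, ← mul_assoc v, hvz, one_mul]
      have h1 : (z * v) + (1 - z * v) = 1 := by abel
      rcases IsLocalRing.isUnit_or_isUnit_of_add_one h1 with h | h
      · have he1 : z * v = 1 := h.mul_right_cancel (by rw [hee, one_mul])
        exact hz ⟨⟨z, v, he1, hvz⟩, rfl⟩
      · have he0 : z * v = 0 := by
          have h2 : (1 - z * v) * (z * v) = (1 - z * v) * 0 := by
            rw [sub_mul, one_mul, hee, sub_self, mul_zero]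
          exact h.mul_left_cancel h2
        have : (1 : R) = 0 := by
          calc (1:R) = (v * z) * (v * z) := by rw [hvz, one_mul]
          _ = v * (z * v) * z := by rw [mul_assoc, ← mul_assoc z, ← mul_assoc v]
          _ = 0 := by rw [he0, mul_zero, zero_mul]
        exact one_ne_zero this
    · exact hM.ne_top (M.eq_top_of_isUnit_mem hiM hu)

theorem strictly_triangular_pow_eq_zero {F : Type*} [Field F] {n : ℕ}
    (M : Matrix (Fin n) (Fin n) F) (h : ∀ i j : Fin n, (j : ℕ) ≤ (i : ℕ) → M i j = 0) :
    M ^ n = 0 := by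
  have key : ∀ k : ℕ, ∀ i j : Fin n, (M ^ k) i j ≠ 0 → (i : ℕ) + k ≤ (j : ℕ) := by
    intro k
    induction k with
    | zero =>
      intro i j hij
      rw [pow_zero] at hij
      rcases eq_or_ne i j with rfl | hne
      · omega
      · exact absurd (Matrix.one_apply_ne hne) hij
    | succ k ih =>
      intro i j hij
      rw [pow_succ, Matrix.mul_apply] at hij
      obtain ⟨l, -, hl⟩ := Finset.exists_ne_zero_of_sum_ne_zero hij
      have h1 : (i : ℕ) + k ≤ (l : ℕ) := ih i l (left_ne_zero_of_mul hl)
      have h2 : (l : ℕ) < (j : ℕ) := by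
        by_contra hc
        exact right_ne_zero_of_mul hl (h l j (by omega))
      omega
  ext i j
  simp only [Matrix.zero_apply]
  by_contra hij
  have := key n i j hij
  omega

section
variable {F : Type*} [Field F] {n : ℕ}
variable (S : Subalgebra F (Matrix (Fin n) (Fin n) F))
variable (hS : ∀ A ∈ S, ∀ i j : Fin n, j < i → A i j = 0)

include hS in
theorem diag_mul_S (a b : S) (i : Fin n) :
    (↑(a * b) : Matrix (Fin n) (Fin n) F) i i = (↑a : Matrix (Fin n) (Fin n) F) i i * (↑b : Matrix (Fin n) (Fin n) F) i i := by
  push_cast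
  rw [Matrix.mul_apply]
  apply Finset.sum_eq_single i
  · intro k _ hk
    rcases lt_or_gt_of_ne hk with h | h
    · rw [hS ↑a a.2 i k h, zero_mul]
    · rw [hS ↑b b.2 k i h, mul_zero]
  · intro h; exact absurd (Finset.mem_univ i) h

theorem algebraMap_coe_apply (lam : F) (i : Fin n) :
    (↑(algebraMap F S lam) : Matrix (Fin n) (Fin n) F) i i = lam := by
  have : (↑(algebraMap F S lam) : Matrix (Fin n) (Fin n) F) = algebraMap F (Matrix (Fin n) (Fin n) F) lam := rfl
  rw [this, Algebra.algebraMap_eq_smul_one]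
  simp [Matrix.one_apply]

include hS in
theorem nonunit_of_diag_zero (c : S) (i : Fin n)
    (hc : (↑c : Matrix (Fin n) (Fin n) F) i i = 0) : ¬ IsUnit c := by
  intro hu
  obtain ⟨u, rfl⟩ := hu
  have h1 : (↑u : S) * ↑u⁻¹ = 1 := u.mul_inv
  have := diag_mul_S S hS (↑u) (↑u⁻¹) i
  rw [h1, hc, zero_mul] at this
  have h2 : (↑(1 : S) : Matrix (Fin n) (Fin n) F) i i = 1 := by
    push_cast; simp [Matrix.one_apply]
  rw [h2] at this
  exact one_ne_zero this

end

section
variable {F : Type*} [Field F] {n : ℕ}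
variable (S : Subalgebra F (Matrix (Fin n) (Fin n) F))
variable (hS : ∀ A ∈ S, ∀ i j : Fin n, j < i → A i j = 0)
variable (hloc : IsLocalRing S)

include hS hloc in
theorem jac_diag_zero (a : S) (ha : a ∈ Ideal.jacobson (⊥ : Ideal S)) (i : Fin n) :
    (↑a : Matrix (Fin n) (Fin n) F) i i = 0 := by
  by_contra hne
  set lam : F := (↑a : Matrix (Fin n) (Fin n) F) i i with hlam
  have hb : (a - algebraMap F S lam) ∈ Ideal.jacobson (⊥ : Ideal S) := by
    rw [mem_jacobson_bot_iff_of_local]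
    apply nonunit_of_diag_zero S hS _ i
    have := algebraMap_coe_apply (S := S) lam i
    push_cast at this ⊢
    rw [Matrix.sub_apply, this, ← hlam, sub_self]
  have halg : algebraMap F S lam ∈ Ideal.jacobson (⊥ : Ideal S) := by
    have : algebraMap F S lam = a - (a - algebraMap F S lam) := by
      rw [sub_sub_cancel]
    rw [this]
    exact Ideal.sub_mem _ ha hb
  rw [mem_jacobson_bot_iff_of_local] at halg
  exact halg ((algebraMap F S).isUnit_map (isUnit_iff_ne_zero.2 hne))

include hS hloc in
theorem jac_pow_eq_zero (a : S) (ha : a ∈ Ideal.jacobson (⊥ : Ideal S)) :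
    a ^ n = 0 := by
  have h : (↑a : Matrix (Fin n) (Fin n) F) ^ n = 0 := by
    apply strictly_triangular_pow_eq_zero
    intro i j hij
    rcases eq_or_ne j i with rfl | hne
    · exact jac_diag_zero S hS hloc a ha j
    · exact hS ↑a a.2 i j (lt_of_le_of_ne (by exact_mod_cast hij) hne)
  ext1
  push_cast [h]
  rfl

include hS hloc in
theorem decomp (hn : 0 < n) (a : S) :
    ∃ (lam : F) (j : S), j ∈ Ideal.jacobson (⊥ : Ideal S) ∧ a = algebraMap F S lam + j := by
  set i₀ : Fin n := ⟨0, hn⟩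
  set lam : F := (↑a : Matrix (Fin n) (Fin n) F) i₀ i₀ with hlam
  refine ⟨lam, a - algebraMap F S lam, ?_, by rw [add_sub_cancel]⟩
  rw [mem_jacobson_bot_iff_of_local]
  apply nonunit_of_diag_zero S hS _ i₀
  have := algebraMap_coe_apply (S := S) lam i₀
  push_cast at this ⊢
  rw [Matrix.sub_apply, this, ← hlam, sub_self]

end

set_option synthInstance.maxHeartbeats 1000000
set_option maxHeartbeats 1000000

/-- The Jacobson radical of a ring, regarded as a non-unital subring. -/
def jacobsonRadicalSubring (S : Type*) [Ring S] : NonUnitalSubring S where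
  carrier := {x | x ∈ Ideal.jacobson (⊥ : Ideal S)}
  add_mem' := by
    intro a b ha hb
    exact Ideal.add_mem (Ideal.jacobson (⊥ : Ideal S)) ha hb
  zero_mem' := by
    show (0 : S) ∈ Ideal.jacobson (⊥ : Ideal S)
    exact Ideal.zero_mem _
  neg_mem' := by
    intro x hx
    exact Submodule.neg_mem (Ideal.jacobson (⊥ : Ideal S)) hx
  mul_mem' := by
    intro a b _ hb
    exact Ideal.mul_mem_left (Ideal.jacobson (⊥ : Ideal S)) a hb

theorem mem_jrs {S : Type*} [Ring S] (z : S) :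
    z ∈ jacobsonRadicalSubring S ↔ z ∈ Ideal.jacobson (⊥ : Ideal S) := Iff.rfl

/-- A local unital subalgebra `S` of the upper triangular matrices is centrally essential
iff its Jacobson radical, regarded as a non-unital ring, is centrally essential. -/
theorem centrallyEssential_iff_jacobson_centrallyEssential
    (F : Type*) [Field F] (n : ℕ) (hn : 0 < n)
    (S : Subalgebra F (Matrix (Fin n) (Fin n) F))
    (hS : ∀ A ∈ S, ∀ i j : Fin n, j < i → A i j = 0)
    (hloc : IsLocalRing S) :
    IsCentrallyEssential S ↔ IsCentrallyEssential (jacobsonRadicalSubring S) := by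
  constructor
  · rintro (hcomm | h)
    · left
      intro a b
      exact Subtype.ext (hcomm ↑a ↑b)
    · right
      intro a hanc
      have hancS : ¬ ∀ b : S, (↑a : S) * b = b * ↑a := by
        intro hall
        exact hanc fun b => Subtype.ext (hall ↑b)
      obtain ⟨x, y, hxc, hyc, hx0, hy0, hxy⟩ := h ↑a hancS
      have hxJ : x ∈ Ideal.jacobson (⊥ : Ideal S) := by
        rw [mem_jacobson_bot_iff_of_local]
        intro hu
        obtain ⟨u, rfl⟩ := hu
        apply hancS
        have hinv : ∀ b : S, (↑u⁻¹ : S) * b = b * ↑u⁻¹ := by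
          intro b
          calc (↑u⁻¹ : S) * b = ↑u⁻¹ * b * (↑u * ↑u⁻¹) := by rw [u.mul_inv, mul_one]
          _ = ↑u⁻¹ * (b * ↑u) * ↑u⁻¹ := by rw [← mul_assoc, mul_assoc (↑u⁻¹ : S) b]
          _ = ↑u⁻¹ * (↑u * b) * ↑u⁻¹ := by rw [hxc b]
          _ = b * ↑u⁻¹ := by rw [← mul_assoc, u.inv_mul, one_mul]
        have ha_eq : (↑a : S) = y * ↑u⁻¹ := by
          rw [← hxy, mul_assoc, u.mul_inv, mul_one]
        intro b
        rw [ha_eq, mul_assoc, hinv b, ← mul_assoc, hyc b, mul_assoc]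
      have hyJ : y ∈ Ideal.jacobson (⊥ : Ideal S) := by
        rw [← hxy]
        exact Ideal.mul_mem_left _ ↑a hxJ
      refine ⟨⟨x, hxJ⟩, ⟨y, hyJ⟩, fun b => Subtype.ext (hxc ↑b),
        fun b => Subtype.ext (hyc ↑b), fun hh => hx0 (congrArg Subtype.val hh),
        fun hh => hy0 (congrArg Subtype.val hh), Subtype.ext hxy⟩
  · rintro (hcomm | h)
    · left
      intro a b
      obtain ⟨la, ja, hja, haeq⟩ := decomp S hS hloc hn a
      obtain ⟨lb, jb, hjb, hbeq⟩ := decomp S hS hloc hn b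
      have hj : ja * jb = jb * ja :=
        congrArg Subtype.val (hcomm ⟨ja, hja⟩ ⟨jb, hjb⟩)
      have e1 : algebraMap F S la * algebraMap F S lb
          = algebraMap F S lb * algebraMap F S la := by
        rw [← map_mul, ← map_mul, mul_comm]
      rw [haeq, hbeq]
      simp only [add_mul, mul_add]
      rw [e1, hj, Algebra.commutes la jb, ← Algebra.commutes lb ja]
      abel
    · right
      intro a hanc
      obtain ⟨lam, j, hjJ, haeq⟩ := decomp S hS hloc hn a
      have hjnc : ¬ ∀ b : jacobsonRadicalSubring S,
          (⟨j, hjJ⟩ : jacobsonRadicalSubring S) * b = b * ⟨j, hjJ⟩ := by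
        intro hall
        apply hanc
        have hjc : ∀ b : S, j * b = b * j := by
          intro b
          obtain ⟨mu, k, hkJ, hbeq⟩ := decomp S hS hloc hn b
          have hk : j * k = k * j := congrArg Subtype.val (hall ⟨k, hkJ⟩)
          rw [hbeq, mul_add, add_mul, hk, Algebra.commutes mu j]
        intro b
        rw [haeq, add_mul, mul_add, hjc b, Algebra.commutes lam b]
      obtain ⟨X, Y, hXc, hYc, hX0, hY0, hXY⟩ := h ⟨j, hjJ⟩ hjnc
      have hXcS : ∀ b : S, (↑X : S) * b = b * ↑X := by
        intro b
        obtain ⟨mu, k, hkJ, hbeq⟩ := decomp S hS hloc hn b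
        have hk : (↑X : S) * k = k * ↑X := congrArg Subtype.val (hXc ⟨k, hkJ⟩)
        rw [hbeq, mul_add, add_mul, hk, Algebra.commutes mu (↑X : S)]
      have hYcS : ∀ b : S, (↑Y : S) * b = b * ↑Y := by
        intro b
        obtain ⟨mu, k, hkJ, hbeq⟩ := decomp S hS hloc hn b
        have hk : (↑Y : S) * k = k * ↑Y := congrArg Subtype.val (hYc ⟨k, hkJ⟩)
        rw [hbeq, mul_add, add_mul, hk, Algebra.commutes mu (↑Y : S)]
      have hjX : j * ↑X = ↑Y := congrArg Subtype.val hXY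
      have hX0' : (↑X : S) ≠ 0 := fun hh => hX0 (Subtype.ext hh)
      have hY0' : (↑Y : S) ≠ 0 := fun hh => hY0 (Subtype.ext hh)
      have haX : a * ↑X = algebraMap F S lam * ↑X + ↑Y := by
        rw [haeq, add_mul, hjX]
      have hne : a * ↑X ≠ 0 := by
        intro h0
        rw [haX] at h0
        rcases eq_or_ne lam 0 with rfl | hlam
        · rw [map_zero, zero_mul, zero_add] at h0
          exact hY0' h0
        · have hjX' : j * ↑X = algebraMap F S (-lam) * ↑X := by
            have h1 : (↑Y : S) = -(algebraMap F S lam * ↑X) :=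
              eq_neg_of_add_eq_zero_right h0
            rw [hjX, h1, map_neg]
            exact (neg_mul (algebraMap F S lam) (↑X : S)).symm
          have hpow : ∀ m : ℕ, j ^ m * ↑X = algebraMap F S ((-lam) ^ m) * ↑X := by
            intro m
            induction m with
            | zero => simp
            | succ m ih =>
              calc j ^ (m + 1) * ↑X = j ^ m * (j * ↑X) := by rw [pow_succ, mul_assoc]
              _ = j ^ m * (algebraMap F S (-lam) * ↑X) := by rw [hjX']
              _ = (j ^ m * algebraMap F S (-lam)) * ↑X := by rw [mul_assoc]
              _ = (algebraMap F S (-lam) * j ^ m) * ↑X := by rw [Algebra.commutes]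
              _ = algebraMap F S (-lam) * (j ^ m * ↑X) := by rw [mul_assoc]
              _ = algebraMap F S (-lam) * (algebraMap F S ((-lam) ^ m) * ↑X) := by rw [ih]
              _ = algebraMap F S ((-lam) ^ (m + 1)) * ↑X := by
                  rw [← mul_assoc, ← map_mul, pow_succ']
          have hzero := hpow n
          rw [jac_pow_eq_zero S hS hloc j hjJ, zero_mul] at hzero
          obtain ⟨u, hu⟩ := (algebraMap F S).isUnit_map
            (isUnit_iff_ne_zero.2 (pow_ne_zero n (neg_ne_zero.2 hlam)))
          apply hX0'
          calc (↑X : S) = ↑u⁻¹ * (↑u * ↑X) := by rw [← mul_assoc, u.inv_mul, one_mul]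
          _ = 0 := by rw [hu, ← hzero, mul_zero]
      have hcent : ∀ b : S, (a * ↑X) * b = b * (a * ↑X) := by
        intro b
        rw [haX, add_mul, mul_add, hYcS b]
        congr 1
        calc (algebraMap F S lam * ↑X) * b = algebraMap F S lam * (↑X * b) := by
              rw [mul_assoc]
        _ = algebraMap F S lam * (b * ↑X) := by rw [hXcS b]
        _ = (algebraMap F S lam * b) * ↑X := by rw [← mul_assoc]
        _ = (b * algebraMap F S lam) * ↑X := by rw [Algebra.commutes]
        _ = b * (algebraMap F S lam * ↑X) := by rw [mul_assoc]
      exact ⟨(↑X : S), a * (↑X : S), hXcS, hcent, hX0', hne, rfl⟩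
end

section
/- Let F be a field and n ≥ 3 an integer. Then the non-unital ring N_n(F) of strictly upper triangular n×n matrices over F is not centrally essential. -/
/-- The non-unital algebra `N_n(F)` of strictly upper triangular `n × n` matrices. -/
def strictUpperTriangularAlgebra (F : Type*) [CommRing F] (n : ℕ) :
    NonUnitalSubalgebra F (Matrix (Fin n) (Fin n) F) where
  carrier := {A | ∀ i j : Fin n, j ≤ i → A i j = 0}
  add_mem' := by
    intro A B ha hb i j hij
    simp [Matrix.add_apply, ha i j hij, hb i j hij]
  zero_mem' := by
    intro i j hij
    rfl
  mul_mem' := by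
    intro A B ha hb i j hij
    rw [Matrix.mul_apply]
    refine Finset.sum_eq_zero fun k _ => ?_
    rcases le_or_gt k i with h | h
    · rw [ha i k h, zero_mul]
    · rw [hb k j (hij.trans h.le), mul_zero]
  smul_mem' := by
    intro c A ha i j hij
    simp [Matrix.smul_apply, ha i j hij]

/-- For `n ≥ 3`, the non-unital ring `N_n(F)` of strictly upper triangular matrices is not
centrally essential. -/
theorem strictUpperTriangular_not_centrallyEssential
    (F : Type*) [Field F] (n : ℕ) (hn : 3 ≤ n) :
    ¬ IsCentrallyEssential (strictUpperTriangularAlgebra F n) := by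
  intro h
  have h0 : (0:ℕ) < n := by omega
  have h1 : (1:ℕ) < n := by omega
  have h2 : (2:ℕ) < n := by omega
  set i0 : Fin n := ⟨0, h0⟩ with hi0
  set i1 : Fin n := ⟨1, h1⟩ with hi1
  set i2 : Fin n := ⟨2, h2⟩ with hi2
  have hmem : ∀ (i j : Fin n), i < j →
      Matrix.single i j (1:F) ∈ strictUpperTriangularAlgebra F n := by
    intro i j hij a b hba
    apply Matrix.single_apply_of_ne
    rintro ⟨rfl, rfl⟩
    exact absurd hij (not_lt.2 hba)
  set e01 : strictUpperTriangularAlgebra F n :=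
    ⟨Matrix.single i0 i1 (1:F), hmem i0 i1 (by simp [hi0, hi1, Fin.lt_def])⟩ with he01
  set e12 : strictUpperTriangularAlgebra F n :=
    ⟨Matrix.single i1 i2 (1:F), hmem i1 i2 (by simp [hi1, hi2, Fin.lt_def])⟩ with he12
  have hne20 : i2 ≠ i0 := by simp [hi0, hi2, Fin.ext_iff]
  have key : e01 * e12 ≠ e12 * e01 := by
    intro he
    have h' : (↑(e01 * e12) : Matrix (Fin n) (Fin n) F) = ↑(e12 * e01) :=
      congrArg _ he
    rw [MulMemClass.coe_mul, MulMemClass.coe_mul] at h'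
    simp only [he01, he12] at h'
    rw [Matrix.single_mul_single_same] at h'
    have hthis := congrFun (congrFun h' i0) i2
    rw [Matrix.single_apply_same,
      Matrix.single_mul_apply_of_ne _ _ _ _ _
        (show i0 ≠ i1 by simp [hi0, hi1, Fin.ext_iff])] at hthis
    simp at hthis
  rcases h with hcomm | hce
  · exact key (hcomm e01 e12)
  · have hnc : ¬ ∀ b : strictUpperTriangularAlgebra F n, e01 * b = b * e01 := fun hb =>
      key (hb e12)
    obtain ⟨x, y, hx, hy, hx0, hy0, hxy⟩ := hce e01 hnc
    have hrow : ∀ j : Fin n, (x : Matrix (Fin n) (Fin n) F) i1 j = 0 := by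
      intro j
      have hx01 : (↑(x * e01) : Matrix (Fin n) (Fin n) F) = ↑(e01 * x) :=
        congrArg _ (hx e01)
      rw [MulMemClass.coe_mul, MulMemClass.coe_mul] at hx01
      have hentry := congrFun (congrFun hx01 i0) j
      rw [he01, Matrix.single_mul_apply_same, one_mul] at hentry
      rw [← hentry]
      by_cases hj : j = i1
      · subst hj
        rw [Matrix.mul_single_apply_same, mul_one]
        exact x.2 i0 i0 le_rfl
      · rw [Matrix.mul_single_apply_of_ne _ _ _ _ j hj]
    have hzero : e01 * x = 0 := by
      apply Subtype.ext
      rw [MulMemClass.coe_mul]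
      ext a b
      by_cases ha : a = i0
      · subst ha
        rw [he01, Matrix.single_mul_apply_same, one_mul, hrow]
        simp
      · rw [he01, Matrix.single_mul_apply_of_ne _ _ _ _ _ ha]
        simp
    exact hy0 (hxy ▸ hzero ▸ rfl)
end

section
/- Let F be a field, n ≥ 2, and S a non-unital F-subalgebra of N_n(F) containing the nilpotent Jordan block A = E₁₂ + E₂₃ + … + E_{(n-1)n}. If S is centrally essential and the center Z(S) of S equals the one-dimensional F-linear span of A^{n-1}, then S is commutative. -/
/-- The nilpotent Jordan block `E₁₂ + E₂₃ + ⋯ + E_{(n-1)n}`. -/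
def jordanBlock (F : Type*) [Field F] (n : ℕ) : Matrix (Fin n) (Fin n) F :=
  Matrix.of fun i j => if (i : ℕ) + 1 = (j : ℕ) then 1 else 0

lemma jordanBlock_pow_support (F : Type*) [Field F] (n k : ℕ) (i j : Fin n)
    (h : ((jordanBlock F n) ^ k) i j ≠ 0) : (i : ℕ) + k = (j : ℕ) := by
  induction k generalizing i j with
  | zero =>
    rw [pow_zero] at h
    by_contra hc
    exact h (Matrix.one_apply_ne (fun he => hc (by rw [he]; omega)))
  | succ k ih =>
    rw [pow_succ, Matrix.mul_apply] at h
    obtain ⟨l, -, hl⟩ := Finset.exists_ne_zero_of_sum_ne_zero h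
    have h1 := ih i l (left_ne_zero_of_mul hl)
    have h2 : (l : ℕ) + 1 = (j : ℕ) := by
      by_contra hc
      exact right_ne_zero_of_mul hl (by simp [jordanBlock, hc])
    omega

/-- If `S` is a centrally essential non-unital subalgebra of the strictly upper triangular
`n × n` matrices containing the nilpotent Jordan block `A` and the center of `S` equals the
`F`-linear span of `A ^ (n - 1)`, then `S` is commutative. -/
theorem commutative_of_center_eq_span_pow
    (F : Type*) [Field F] (n : ℕ) (hn : 2 ≤ n)
    (S : NonUnitalSubalgebra F (Matrix (Fin n) (Fin n) F))
    (hS : ∀ A ∈ S, ∀ i j : Fin n, j ≤ i → A i j = 0)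
    (hA : jordanBlock F n ∈ S)
    (hce : IsCentrallyEssential S)
    (hcen : ∀ B : S, (∀ C : S, B * C = C * B) ↔
      ∃ c : F, (B : Matrix (Fin n) (Fin n) F) = c • (jordanBlock F n) ^ (n - 1)) :
    ∀ B C : S, B * C = C * B := by
  by_contra hnc
  push_neg at hnc
  obtain ⟨B, C, hBC⟩ := hnc
  rcases hce with hcomm | hce
  · exact hBC (hcomm B C)
  obtain ⟨x, y, hx, hy, hx0, hy0, hxy⟩ := hce B (fun h => hBC (h C))
  obtain ⟨c, hxc⟩ := (hcen x).mp hx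
  have key : (B : Matrix (Fin n) (Fin n) F) * (jordanBlock F n) ^ (n - 1) = 0 := by
    ext i j
    rw [Matrix.mul_apply, Matrix.zero_apply]
    apply Finset.sum_eq_zero
    intro l _
    by_cases hl : (l : ℕ) = 0
    · rw [hS B B.2 i l (by simp [Fin.le_def, hl]), zero_mul]
    · have hz : ((jordanBlock F n) ^ (n - 1)) l j = 0 := by
        by_contra hz
        have h1 := jordanBlock_pow_support F n (n - 1) l j hz
        have h2 : 1 ≤ (l : ℕ) := Nat.one_le_iff_ne_zero.mpr hl
        have h3 := j.isLt
        omega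
      rw [hz, mul_zero]
  have hcoe : (B : Matrix (Fin n) (Fin n) F) * (x : Matrix (Fin n) (Fin n) F)
      = (y : Matrix (Fin n) (Fin n) F) := congrArg Subtype.val hxy
  rw [hxc, Matrix.mul_smul, key, smul_zero] at hcoe
  exact hy0 (Subtype.ext hcoe.symm)
end

section
/- Let F be a field of characteristic ≠ 2. Then every centrally essential non-unital F-subalgebra of N₃(F), the algebra of strictly upper triangular 3×3 matrices over F, is commutative. -/
section Aux

variable {F : Type*} [Field F]

lemma N3_mul02 (A B : Matrix (Fin 3) (Fin 3) F)
    (hA : ∀ i j : Fin 3, j ≤ i → A i j = 0) (hB : ∀ i j : Fin 3, j ≤ i → B i j = 0) :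
    (A * B) 0 2 = A 0 1 * B 1 2 := by
  simp [Matrix.mul_apply, Fin.sum_univ_three, hA 0 0 (by decide), hB 2 2 (by decide)]

lemma N3_mul_other (A B : Matrix (Fin 3) (Fin 3) F)
    (hA : ∀ i j : Fin 3, j ≤ i → A i j = 0) (hB : ∀ i j : Fin 3, j ≤ i → B i j = 0)
    (i j : Fin 3) (h : ¬(i = 0 ∧ j = 2)) : (A * B) i j = 0 := by
  have a00 := hA 0 0 (by decide); have a10 := hA 1 0 (by decide)
  have a11 := hA 1 1 (by decide); have a20 := hA 2 0 (by decide)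
  have a21 := hA 2 1 (by decide); have a22 := hA 2 2 (by decide)
  have b00 := hB 0 0 (by decide); have b10 := hB 1 0 (by decide)
  have b11 := hB 1 1 (by decide); have b20 := hB 2 0 (by decide)
  have b21 := hB 2 1 (by decide); have b22 := hB 2 2 (by decide)
  fin_cases i <;> fin_cases j <;>
    simp_all [Matrix.mul_apply, Fin.sum_univ_three]

end Aux

/-- Over a field of characteristic `≠ 2`, every centrally essential non-unital subalgebra of
the strictly upper triangular `3 × 3` matrices is commutative. -/
theorem centrallyEssential_subalgebra_N3_commutative
    (F : Type*) [Field F] (hF : ringChar F ≠ 2)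
    (S : NonUnitalSubalgebra F (Matrix (Fin 3) (Fin 3) F))
    (hS : ∀ A ∈ S, ∀ i j : Fin 3, j ≤ i → A i j = 0)
    (hce : IsCentrallyEssential S) :
    ∀ a b : S, a * b = b * a := by
  have hz : ∀ a : S, ∀ i j : Fin 3, j ≤ i → (a : Matrix (Fin 3) (Fin 3) F) i j = 0 :=
    fun a => hS a a.2
  -- commutation criterion
  have hcomm : ∀ a b : S,
      (a : Matrix (Fin 3) (Fin 3) F) 0 1 * (b : Matrix (Fin 3) (Fin 3) F) 1 2 =
        (b : Matrix (Fin 3) (Fin 3) F) 0 1 * (a : Matrix (Fin 3) (Fin 3) F) 1 2 →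
      a * b = b * a := by
    intro a b h
    apply Subtype.ext
    show (a : Matrix (Fin 3) (Fin 3) F) * b = (b : Matrix (Fin 3) (Fin 3) F) * a
    ext i j
    by_cases hij : i = 0 ∧ j = 2
    · obtain ⟨hi, hj⟩ := hij; subst hi; subst hj
      rw [N3_mul02 _ _ (hz a) (hz b), N3_mul02 _ _ (hz b) (hz a), h]
    · rw [N3_mul_other _ _ (hz a) (hz b) i j hij, N3_mul_other _ _ (hz b) (hz a) i j hij]
  rcases hce with hc | hce
  · exact hc
  · by_contra hnc
    push_neg at hnc
    obtain ⟨A, B, hAB⟩ := hnc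
    obtain ⟨x, y, hx, _hy, hx0, hy0, hax⟩ := hce A (fun h => hAB (h B))
    -- entries at (0,2) of the centrality equations
    have e1 : (x : Matrix (Fin 3) (Fin 3) F) 0 1 * (A : Matrix (Fin 3) (Fin 3) F) 1 2 =
        (A : Matrix (Fin 3) (Fin 3) F) 0 1 * (x : Matrix (Fin 3) (Fin 3) F) 1 2 := by
      have := congrArg (fun m : S => (m : Matrix (Fin 3) (Fin 3) F) 0 2) (hx A)
      simpa [N3_mul02 _ _ (hz x) (hz A), N3_mul02 _ _ (hz A) (hz x)] using this
    have e2 : (x : Matrix (Fin 3) (Fin 3) F) 0 1 * (B : Matrix (Fin 3) (Fin 3) F) 1 2 =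
        (B : Matrix (Fin 3) (Fin 3) F) 0 1 * (x : Matrix (Fin 3) (Fin 3) F) 1 2 := by
      have := congrArg (fun m : S => (m : Matrix (Fin 3) (Fin 3) F) 0 2) (hx B)
      simpa [N3_mul02 _ _ (hz x) (hz B), N3_mul02 _ _ (hz B) (hz x)] using this
    -- x 1 2 ≠ 0
    have hx12 : (x : Matrix (Fin 3) (Fin 3) F) 1 2 ≠ 0 := by
      intro h0
      apply hy0
      apply Subtype.ext
      rw [← congrArg (fun m : S => (m : Matrix (Fin 3) (Fin 3) F)) hax]
      show (A : Matrix (Fin 3) (Fin 3) F) * x = 0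
      ext i j
      by_cases hij : i = 0 ∧ j = 2
      · obtain ⟨hi, hj⟩ := hij; subst hi; subst hj
        rw [N3_mul02 _ _ (hz A) (hz x), h0, mul_zero]; rfl
      · rw [N3_mul_other _ _ (hz A) (hz x) i j hij]; rfl
    apply hAB
    apply hcomm
    have h3 : ((A : Matrix (Fin 3) (Fin 3) F) 0 1 * (B : Matrix (Fin 3) (Fin 3) F) 1 2 -
        (B : Matrix (Fin 3) (Fin 3) F) 0 1 * (A : Matrix (Fin 3) (Fin 3) F) 1 2) *
        (x : Matrix (Fin 3) (Fin 3) F) 1 2 = 0 := by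
      linear_combination (A : Matrix (Fin 3) (Fin 3) F) 1 2 * e2 -
        (B : Matrix (Fin 3) (Fin 3) F) 1 2 * e1
    rcases mul_eq_zero.mp h3 with h | h
    · exact sub_eq_zero.mp h
    · exact absurd h hx12
end

section
/- Let F be a field of characteristic ≠ 2 and let S ⊆ M₇(F) be the F-linear span of the six matrices M₁ = E₁₂ + E₅₇, M₂ = E₁₃ + E₂₄ + E₆₇, M₃ = E₁₄, M₄ = E₁₅ + E₂₇, M₅ = E₁₆ + E₃₇, M₆ = E₁₇. Then S is closed under matrix multiplication (hence is a non-unital F-subalgebra of the strictly upper triangular 7×7 matrices), S is not commutative, and S is centrally essential. -/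
open Matrix

/-- `M₁ = E₁₂ + E₅₇` (with matrix positions `1`-indexed). -/
def ceM1 (F : Type*) [Field F] : Matrix (Fin 7) (Fin 7) F :=
  Matrix.single 0 1 1 + Matrix.single 4 6 1

/-- `M₂ = E₁₃ + E₂₄ + E₆₇`. -/
def ceM2 (F : Type*) [Field F] : Matrix (Fin 7) (Fin 7) F :=
  Matrix.single 0 2 1 + Matrix.single 1 3 1 + Matrix.single 5 6 1

/-- `M₃ = E₁₄`. -/
def ceM3 (F : Type*) [Field F] : Matrix (Fin 7) (Fin 7) F :=
  Matrix.single 0 3 1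

/-- `M₄ = E₁₅ + E₂₇`. -/
def ceM4 (F : Type*) [Field F] : Matrix (Fin 7) (Fin 7) F :=
  Matrix.single 0 4 1 + Matrix.single 1 6 1

/-- `M₅ = E₁₆ + E₃₇`. -/
def ceM5 (F : Type*) [Field F] : Matrix (Fin 7) (Fin 7) F :=
  Matrix.single 0 5 1 + Matrix.single 2 6 1

/-- `M₆ = E₁₇`. -/
def ceM6 (F : Type*) [Field F] : Matrix (Fin 7) (Fin 7) F :=
  Matrix.single 0 6 1

/-- The set of generators `{M₁, …, M₆}`. -/
def ceGenSet (F : Type*) [Field F] : Set (Matrix (Fin 7) (Fin 7) F) :=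
  {ceM1 F, ceM2 F, ceM3 F, ceM4 F, ceM5 F, ceM6 F}

section CEAux

variable (F : Type*) [Field F]

lemma ceStd_mul (i j k l : Fin 7) :
    Matrix.single i j (1:F) * Matrix.single k l 1 =
      if j = k then Matrix.single i l 1 else 0 := by
  split
  · subst ‹j = k›; rw [single_mul_single_same, one_mul]
  · exact Matrix.single_mul_single_of_ne (c := (1:F)) _ _ _ ‹_› _

def ceCombo (c : Fin 6 → F) : Matrix (Fin 7) (Fin 7) F :=
  c 0 • ceM1 F + c 1 • ceM2 F + c 2 • ceM3 F + c 3 • ceM4 F + c 4 • ceM5 F + c 5 • ceM6 F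

lemma ceMul_expand (a b : Fin 6 → F) :
    ceCombo F a * ceCombo F b =
      (a 0 * b 1) • ceM3 F + (a 0 * b 3 + a 1 * b 4 + a 3 * b 0 + a 4 * b 1) • ceM6 F := by
  simp only [ceCombo, ceM1, ceM2, ceM3, ceM4, ceM5, ceM6, add_mul, mul_add,
    smul_mul_assoc, mul_smul_comm, ceStd_mul, smul_smul]
  simp only [Fin.reduceEq, if_true, if_false, reduceIte, smul_zero, add_zero, zero_add]
  module

lemma ceCombo_M1 : ceCombo F (Pi.single 0 1 : Fin 6 → F) = ceM1 F := by simp [ceCombo, Pi.single_apply]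
lemma ceCombo_M2 : ceCombo F (Pi.single 1 1 : Fin 6 → F) = ceM2 F := by simp [ceCombo, Pi.single_apply]
lemma ceCombo_M3 : ceCombo F (Pi.single 2 1 : Fin 6 → F) = ceM3 F := by simp [ceCombo, Pi.single_apply]
lemma ceCombo_M4 : ceCombo F (Pi.single 3 1 : Fin 6 → F) = ceM4 F := by simp [ceCombo, Pi.single_apply]
lemma ceCombo_M5 : ceCombo F (Pi.single 4 1 : Fin 6 → F) = ceM5 F := by simp [ceCombo, Pi.single_apply]
lemma ceCombo_M6 : ceCombo F (Pi.single 5 1 : Fin 6 → F) = ceM6 F := by simp [ceCombo, Pi.single_apply]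

lemma ceCombo_mem (c : Fin 6 → F) : ceCombo F c ∈ Submodule.span F (ceGenSet F) := by
  have h : ∀ M ∈ ceGenSet F, M ∈ Submodule.span F (ceGenSet F) := fun M hM =>
    Submodule.subset_span hM
  refine Submodule.add_mem _ (Submodule.add_mem _ (Submodule.add_mem _ (Submodule.add_mem _
    (Submodule.add_mem _ ?_ ?_) ?_) ?_) ?_) ?_ <;>
    exact Submodule.smul_mem _ _ (h _ (by simp [ceGenSet]))

lemma ceRep (A : Matrix (Fin 7) (Fin 7) F) (hA : A ∈ Submodule.span F (ceGenSet F)) :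
    ∃ c : Fin 6 → F, A = ceCombo F c := by
  induction hA using Submodule.span_induction with
  | mem x hx =>
    rcases hx with h | h | h | h | h | h
    · exact ⟨(Pi.single 0 1 : Fin 6 → F), by rw [h, ceCombo_M1]⟩
    · exact ⟨(Pi.single 1 1 : Fin 6 → F), by rw [h, ceCombo_M2]⟩
    · exact ⟨(Pi.single 2 1 : Fin 6 → F), by rw [h, ceCombo_M3]⟩
    · exact ⟨(Pi.single 3 1 : Fin 6 → F), by rw [h, ceCombo_M4]⟩
    · exact ⟨(Pi.single 4 1 : Fin 6 → F), by rw [h, ceCombo_M5]⟩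
    · exact ⟨(Pi.single 5 1 : Fin 6 → F), by rw [show x = ceM6 F from h, ceCombo_M6]⟩
  | zero => exact ⟨0, by simp [ceCombo]⟩
  | add x y _ _ hx hy =>
    obtain ⟨c, rfl⟩ := hx; obtain ⟨d, rfl⟩ := hy
    exact ⟨c + d, by simp only [ceCombo, Pi.add_apply, add_smul]; module⟩
  | smul r x _ hx =>
    obtain ⟨c, rfl⟩ := hx
    exact ⟨r • c, by simp only [ceCombo, Pi.smul_apply, smul_eq_mul, mul_smul]; module⟩

lemma ceGen_mul (c d : Fin 6 → F) :
    ceCombo F c * ceCombo F d ∈ Submodule.span F (ceGenSet F) := by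
  rw [ceMul_expand]
  exact Submodule.add_mem _
    (Submodule.smul_mem _ _ (Submodule.subset_span (by simp [ceGenSet])))
    (Submodule.smul_mem _ _ (Submodule.subset_span (by simp [ceGenSet])))

lemma ceStd_upper (p q : Fin 7) (h : p < q) (i j : Fin 7) (hij : j ≤ i) :
    Matrix.single p q (1:F) i j = 0 := by
  simp only [Matrix.single, of_apply]
  rw [if_neg]
  rintro ⟨rfl, rfl⟩
  exact absurd h (not_lt.mpr hij)

lemma ceM1_upper (i j : Fin 7) (hij : j ≤ i) : ceM1 F i j = 0 := by
  simp only [ceM1, Matrix.add_apply, ceStd_upper F 0 1 (by decide) i j hij,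
    ceStd_upper F 4 6 (by decide) i j hij, add_zero]

lemma ceM2_upper (i j : Fin 7) (hij : j ≤ i) : ceM2 F i j = 0 := by
  simp only [ceM2, Matrix.add_apply, ceStd_upper F 0 2 (by decide) i j hij,
    ceStd_upper F 1 3 (by decide) i j hij, ceStd_upper F 5 6 (by decide) i j hij, add_zero]

lemma ceM3_upper (i j : Fin 7) (hij : j ≤ i) : ceM3 F i j = 0 :=
  ceStd_upper F 0 3 (by decide) i j hij

lemma ceM4_upper (i j : Fin 7) (hij : j ≤ i) : ceM4 F i j = 0 := by
  simp only [ceM4, Matrix.add_apply, ceStd_upper F 0 4 (by decide) i j hij,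
    ceStd_upper F 1 6 (by decide) i j hij, add_zero]

lemma ceM5_upper (i j : Fin 7) (hij : j ≤ i) : ceM5 F i j = 0 := by
  simp only [ceM5, Matrix.add_apply, ceStd_upper F 0 5 (by decide) i j hij,
    ceStd_upper F 2 6 (by decide) i j hij, add_zero]

lemma ceM6_upper (i j : Fin 7) (hij : j ≤ i) : ceM6 F i j = 0 :=
  ceStd_upper F 0 6 (by decide) i j hij

lemma ceGen_upper (M : Matrix (Fin 7) (Fin 7) F) (hM : M ∈ ceGenSet F)
    (i j : Fin 7) (hij : j ≤ i) : M i j = 0 := by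
  rcases hM with rfl | rfl | rfl | rfl | rfl | h
  · exact ceM1_upper F i j hij
  · exact ceM2_upper F i j hij
  · exact ceM3_upper F i j hij
  · exact ceM4_upper F i j hij
  · exact ceM5_upper F i j hij
  · rw [show M = ceM6 F from h]; exact ceM6_upper F i j hij

lemma ceM4_central (d : Fin 6 → F) :
    ceM4 F * ceCombo F d = d 0 • ceM6 F ∧ ceCombo F d * ceM4 F = d 0 • ceM6 F := by
  constructor
  · rw [← ceCombo_M4, ceMul_expand]; simp [Pi.single_apply]
  · rw [← ceCombo_M4, ceMul_expand]; simp [Pi.single_apply]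

lemma ceM5_central (d : Fin 6 → F) :
    ceM5 F * ceCombo F d = d 1 • ceM6 F ∧ ceCombo F d * ceM5 F = d 1 • ceM6 F := by
  constructor
  · rw [← ceCombo_M5, ceMul_expand]; simp [Pi.single_apply]
  · rw [← ceCombo_M5, ceMul_expand]; simp [Pi.single_apply]

lemma ceM6_central (d : Fin 6 → F) :
    ceM6 F * ceCombo F d = 0 ∧ ceCombo F d * ceM6 F = 0 := by
  constructor
  · rw [← ceCombo_M6, ceMul_expand]; simp [Pi.single_apply]
  · rw [← ceCombo_M6, ceMul_expand]; simp [Pi.single_apply]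

lemma ceM12 : ceM1 F * ceM2 F = ceM3 F := by
  rw [← ceCombo_M1, ← ceCombo_M2, ceMul_expand]; simp [Pi.single_apply]

lemma ceM21 : ceM2 F * ceM1 F = 0 := by
  rw [← ceCombo_M1, ← ceCombo_M2, ceMul_expand]; simp [Pi.single_apply]

lemma ceM3_entry : ceM3 F 0 3 = 1 := by simp [ceM3]
lemma ceM4_entry : ceM4 F 0 4 = 1 := by
  simp [ceM4, Matrix.add_apply, Matrix.single_apply_same]
lemma ceM6_entry : ceM6 F 0 6 = 1 := by simp [ceM6]

lemma ceSpan_upper (A : Matrix (Fin 7) (Fin 7) F) (hA : A ∈ Submodule.span F (ceGenSet F)) :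
    ∀ i j : Fin 7, j ≤ i → A i j = 0 := by
  induction hA using Submodule.span_induction with
  | mem x hx => exact ceGen_upper F x hx
  | zero => intro i j _; simp
  | add x y _ _ hx hy => intro i j hij; simp [Matrix.add_apply, hx i j hij, hy i j hij]
  | smul r x _ hx => intro i j hij; simp [Matrix.smul_apply, hx i j hij]

end CEAux

/-- The `F`-linear span of `M₁, …, M₆` is closed under matrix multiplication (hence it is a
non-unital `F`-subalgebra consisting of strictly upper triangular matrices), it is not
commutative, and it is centrally essential. -/
theorem span_closed_noncommutative_centrallyEssential
    (F : Type*) [Field F] (hF : ringChar F ≠ 2) :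
    (∀ A ∈ Submodule.span F (ceGenSet F), ∀ B ∈ Submodule.span F (ceGenSet F),
        A * B ∈ Submodule.span F (ceGenSet F)) ∧
    ((NonUnitalAlgebra.adjoin F (ceGenSet F) : Set (Matrix (Fin 7) (Fin 7) F)) =
        (Submodule.span F (ceGenSet F) : Set (Matrix (Fin 7) (Fin 7) F))) ∧
    (∀ A ∈ NonUnitalAlgebra.adjoin F (ceGenSet F), ∀ i j : Fin 7, j ≤ i → A i j = 0) ∧
    ¬ (∀ a b : NonUnitalAlgebra.adjoin F (ceGenSet F), a * b = b * a) ∧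
    IsCentrallyEssential (NonUnitalAlgebra.adjoin F (ceGenSet F)) := by
  have h1 : ∀ A ∈ Submodule.span F (ceGenSet F), ∀ B ∈ Submodule.span F (ceGenSet F),
      A * B ∈ Submodule.span F (ceGenSet F) := by
    intro A hA B hB
    obtain ⟨c, rfl⟩ := ceRep F A hA
    obtain ⟨d, rfl⟩ := ceRep F B hB
    exact ceGen_mul F c d
  have h2 : ((NonUnitalAlgebra.adjoin F (ceGenSet F) : Set (Matrix (Fin 7) (Fin 7) F)) =
      (Submodule.span F (ceGenSet F) : Set (Matrix (Fin 7) (Fin 7) F))) := by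
    apply Set.Subset.antisymm
    · intro x hx
      have hle := NonUnitalAlgebra.adjoin_le
        (S := (Submodule.span F (ceGenSet F)).toNonUnitalSubalgebra
          (fun x y hx hy => h1 x hx y hy)) (Submodule.subset_span (R := F))
      exact Submodule.mem_toNonUnitalSubalgebra.mp (hle hx)
    · intro x hx
      have hle : Submodule.span F (ceGenSet F) ≤
          (NonUnitalAlgebra.adjoin F (ceGenSet F)).toSubmodule :=
        Submodule.span_le.mpr (NonUnitalAlgebra.subset_adjoin F)
      exact hle hx
  have hmem : ∀ A : Matrix (Fin 7) (Fin 7) F,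
      A ∈ NonUnitalAlgebra.adjoin F (ceGenSet F) ↔ A ∈ Submodule.span F (ceGenSet F) := by
    intro A
    constructor
    · intro h; have : A ∈ (NonUnitalAlgebra.adjoin F (ceGenSet F) : Set _) := h
      rw [h2] at this; exact this
    · intro h; have : A ∈ (Submodule.span F (ceGenSet F) : Set _) := h
      rw [← h2] at this; exact this
  refine ⟨h1, h2, ?_, ?_, ?_⟩
  · -- upper triangular
    intro A hA i j hij
    exact ceSpan_upper F A ((hmem A).mp hA) i j hij
  · -- noncommutative
    intro hcomm
    have m1 : ceM1 F ∈ NonUnitalAlgebra.adjoin F (ceGenSet F) :=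
      NonUnitalAlgebra.subset_adjoin F (by simp [ceGenSet])
    have m2 : ceM2 F ∈ NonUnitalAlgebra.adjoin F (ceGenSet F) :=
      NonUnitalAlgebra.subset_adjoin F (by simp [ceGenSet])
    have := congrArg Subtype.val (hcomm ⟨ceM1 F, m1⟩ ⟨ceM2 F, m2⟩)
    have h' : ceM1 F * ceM2 F = ceM2 F * ceM1 F := this
    rw [ceM12, ceM21] at h'
    have := congrFun (congrFun h' 0) 3
    rw [ceM3_entry] at this
    simp at this
  · -- centrally essential
    right
    intro a ha
    obtain ⟨c, hc⟩ := ceRep F a.1 ((hmem _).mp a.2)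
    have hc12 : ¬ (c 0 = 0 ∧ c 1 = 0) := by
      intro ⟨h0, h1'⟩
      apply ha
      intro b
      obtain ⟨d, hd⟩ := ceRep F b.1 ((hmem _).mp b.2)
      apply Subtype.ext
      show a.1 * b.1 = b.1 * a.1
      rw [hc, hd, ceMul_expand, ceMul_expand, h0, h1']
      module
    have m6mem : ∀ r : F, r • ceM6 F ∈ NonUnitalAlgebra.adjoin F (ceGenSet F) := by
      intro r
      exact (hmem _).mpr (Submodule.smul_mem _ _
        (Submodule.subset_span (by simp [ceGenSet])))
    by_cases h0 : c 0 = 0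
    · -- then c 1 ≠ 0, use M5
      have h1' : c 1 ≠ 0 := fun h => hc12 ⟨h0, h⟩
      have m5 : ceM5 F ∈ NonUnitalAlgebra.adjoin F (ceGenSet F) :=
        NonUnitalAlgebra.subset_adjoin F (by simp [ceGenSet])
      refine ⟨⟨ceM5 F, m5⟩, ⟨c 1 • ceM6 F, m6mem _⟩, ?_, ?_, ?_, ?_, ?_⟩
      · intro b
        obtain ⟨d, hd⟩ := ceRep F b.1 ((hmem _).mp b.2)
        apply Subtype.ext
        show ceM5 F * b.1 = b.1 * ceM5 F
        rw [hd, (ceM5_central F d).1, (ceM5_central F d).2]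
      · intro b
        obtain ⟨d, hd⟩ := ceRep F b.1 ((hmem _).mp b.2)
        apply Subtype.ext
        show (c 1 • ceM6 F) * b.1 = b.1 * (c 1 • ceM6 F)
        rw [hd, smul_mul_assoc, mul_smul_comm, (ceM6_central F d).1, (ceM6_central F d).2,
          smul_zero]
      · intro h
        have : ceM5 F = 0 := congrArg Subtype.val h
        have := congrFun (congrFun this 0) 5
        simp [ceM5, Matrix.add_apply] at this
      · intro h
        have : c 1 • ceM6 F = 0 := congrArg Subtype.val h
        have h6 := congrFun (congrFun this 0) 6
        rw [Matrix.smul_apply, ceM6_entry, smul_eq_mul, mul_one] at h6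
        exact h1' h6
      · apply Subtype.ext
        show a.1 * ceM5 F = c 1 • ceM6 F
        rw [hc, (ceM5_central F c).2]
    · -- c 0 ≠ 0, use M4
      have m4 : ceM4 F ∈ NonUnitalAlgebra.adjoin F (ceGenSet F) :=
        NonUnitalAlgebra.subset_adjoin F (by simp [ceGenSet])
      refine ⟨⟨ceM4 F, m4⟩, ⟨c 0 • ceM6 F, m6mem _⟩, ?_, ?_, ?_, ?_, ?_⟩
      · intro b
        obtain ⟨d, hd⟩ := ceRep F b.1 ((hmem _).mp b.2)
        apply Subtype.ext
        show ceM4 F * b.1 = b.1 * ceM4 F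
        rw [hd, (ceM4_central F d).1, (ceM4_central F d).2]
      · intro b
        obtain ⟨d, hd⟩ := ceRep F b.1 ((hmem _).mp b.2)
        apply Subtype.ext
        show (c 0 • ceM6 F) * b.1 = b.1 * (c 0 • ceM6 F)
        rw [hd, smul_mul_assoc, mul_smul_comm, (ceM6_central F d).1, (ceM6_central F d).2,
          smul_zero]
      · intro h
        have : ceM4 F = 0 := congrArg Subtype.val h
        have h4 := congrFun (congrFun this 0) 4
        rw [ceM4_entry] at h4
        simp at h4
      · intro h
        have : c 0 • ceM6 F = 0 := congrArg Subtype.val h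
        have h6 := congrFun (congrFun this 0) 6
        rw [Matrix.smul_apply, ceM6_entry, smul_eq_mul, mul_one] at h6
        exact h0 h6
      · apply Subtype.ext
        show a.1 * ceM4 F = c 0 • ceM6 F
        rw [hc, (ceM4_central F c).2]
end

section
/- Let F be a field of characteristic ≠ 2 and n ≥ 7 an integer. Let S ⊆ M_n(F) be the set of all matrices A determined by parameters a₁₂, a₁₃, …, a₁ₙ ∈ F as follows: the first row of A is (0, a₁₂, a₁₃, …, a₁ₙ), the (2,4) entry equals a₁₃, the (2,n) entry equals a_{1,n-2}, the (3,n) entry equals a_{1,n-1}, the (n-2,n) entry equals a₁₂, the (n-1,n) entry equals a₁₃, and all other entries are zero. Then S is a non-unital F-subalgebra of the strictly upper triangular n×n matrices, S is not commutative, and S is centrally essential. -/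
/-- The matrix determined by the parameters `a_{12}, …, a_{1n}` (here `a j` is the entry in
position `(1, j+1)` in `1`-indexed notation, i.e. in position `(0, j)` in `0`-indexed
notation): the first row is `(0, a_{12}, …, a_{1n})`, the `(2,4)` entry is `a_{13}`, the
`(2,n)` entry is `a_{1,n-2}`, the `(3,n)` entry is `a_{1,n-1}`, the `(n-2,n)` entry is
`a_{12}`, the `(n-1,n)` entry is `a_{13}`, and all other entries vanish. -/
def specialMatrix (F : Type*) [Field F] (n : ℕ) (a : ℕ → F) : Matrix (Fin n) (Fin n) F :=
  Matrix.of fun i j =>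
    if (i : ℕ) = 0 ∧ 1 ≤ (j : ℕ) then a j
    else if (i : ℕ) = 1 ∧ (j : ℕ) = 3 then a 2
    else if (i : ℕ) = 1 ∧ (j : ℕ) = n - 1 then a (n - 3)
    else if (i : ℕ) = 2 ∧ (j : ℕ) = n - 1 then a (n - 2)
    else if (i : ℕ) = n - 3 ∧ (j : ℕ) = n - 1 then a 1
    else if (i : ℕ) = n - 2 ∧ (j : ℕ) = n - 1 then a 2
    else 0

section Aux

variable {F : Type*} [Field F] {n : ℕ}

/-- the parameters of a product of two special matrices -/
def smPr (F : Type*) [Field F] (n : ℕ) (a b : ℕ → F) : ℕ → F := fun j =>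
  if j = 3 then a 1 * b 2
  else if j = n - 1 then
    a 1 * b (n - 3) + a 2 * b (n - 2) + a (n - 3) * b 1 + a (n - 2) * b 2
  else 0

lemma smA0 (hn : 7 ≤ n) (a : ℕ → F) (i : Fin n) : specialMatrix F n a i ⟨0, by omega⟩ = 0 := by
  simp only [specialMatrix, Matrix.of_apply, Fin.val_mk]
  split_ifs <;> first | rfl | (exfalso; (try simp only [true_and, and_true, false_and, and_false, and_self, not_true, not_false_iff] at *); try omega)

lemma smA1 (hn : 7 ≤ n) (a : ℕ → F) (i : Fin n) :
    specialMatrix F n a i ⟨1, by omega⟩ = if (i:ℕ) = 0 then a 1 else 0 := by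
  simp only [specialMatrix, Matrix.of_apply, Fin.val_mk]
  split_ifs <;> first | rfl | (exfalso; (try simp only [true_and, and_true, false_and, and_false, and_self, not_true, not_false_iff] at *); try omega)

lemma smA2 (hn : 7 ≤ n) (a : ℕ → F) (i : Fin n) :
    specialMatrix F n a i ⟨2, by omega⟩ = if (i:ℕ) = 0 then a 2 else 0 := by
  simp only [specialMatrix, Matrix.of_apply, Fin.val_mk]
  split_ifs <;> first | rfl | (exfalso; (try simp only [true_and, and_true, false_and, and_false, and_self, not_true, not_false_iff] at *); try omega)

lemma smA3 (hn : 7 ≤ n) (a : ℕ → F) (i : Fin n) :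
    specialMatrix F n a i ⟨n-3, by omega⟩ = if (i:ℕ) = 0 then a (n-3) else 0 := by
  simp only [specialMatrix, Matrix.of_apply, Fin.val_mk]
  split_ifs <;> first | rfl | (exfalso; (try simp only [true_and, and_true, false_and, and_false, and_self, not_true, not_false_iff] at *); try omega)

lemma smA4 (hn : 7 ≤ n) (a : ℕ → F) (i : Fin n) :
    specialMatrix F n a i ⟨n-2, by omega⟩ = if (i:ℕ) = 0 then a (n-2) else 0 := by
  simp only [specialMatrix, Matrix.of_apply, Fin.val_mk]
  split_ifs <;> first | rfl | (exfalso; (try simp only [true_and, and_true, false_and, and_false, and_self, not_true, not_false_iff] at *); try omega)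

lemma smB1 (hn : 7 ≤ n) (b : ℕ → F) (j : Fin n) :
    specialMatrix F n b ⟨1, by omega⟩ j =
      if (j:ℕ) = 3 then b 2 else if (j:ℕ) = n-1 then b (n-3) else 0 := by
  simp only [specialMatrix, Matrix.of_apply, Fin.val_mk]
  split_ifs <;> first | rfl | (exfalso; (try simp only [true_and, and_true, false_and, and_false, and_self, not_true, not_false_iff] at *); try omega)

lemma smB2 (hn : 7 ≤ n) (b : ℕ → F) (j : Fin n) :
    specialMatrix F n b ⟨2, by omega⟩ j = if (j:ℕ) = n-1 then b (n-2) else 0 := by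
  simp only [specialMatrix, Matrix.of_apply, Fin.val_mk]
  split_ifs <;> first | rfl | (exfalso; (try simp only [true_and, and_true, false_and, and_false, and_self, not_true, not_false_iff] at *); try omega)

lemma smB3 (hn : 7 ≤ n) (b : ℕ → F) (j : Fin n) :
    specialMatrix F n b ⟨n-3, by omega⟩ j = if (j:ℕ) = n-1 then b 1 else 0 := by
  simp only [specialMatrix, Matrix.of_apply, Fin.val_mk]
  split_ifs <;> first | rfl | (exfalso; (try simp only [true_and, and_true, false_and, and_false, and_self, not_true, not_false_iff] at *); try omega)

lemma smB4 (hn : 7 ≤ n) (b : ℕ → F) (j : Fin n) :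
    specialMatrix F n b ⟨n-2, by omega⟩ j = if (j:ℕ) = n-1 then b 2 else 0 := by
  simp only [specialMatrix, Matrix.of_apply, Fin.val_mk]
  split_ifs <;> first | rfl | (exfalso; (try simp only [true_and, and_true, false_and, and_false, and_self, not_true, not_false_iff] at *); try omega)

lemma smBout (hn : 7 ≤ n) (b : ℕ → F) (k j : Fin n) (h0 : (k:ℕ) ≠ 0) (h1 : (k:ℕ) ≠ 1)
    (h2 : (k:ℕ) ≠ 2) (h3 : (k:ℕ) ≠ n-3) (h4 : (k:ℕ) ≠ n-2) :
    specialMatrix F n b k j = 0 := by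
  simp only [specialMatrix, Matrix.of_apply]
  split_ifs <;> first | rfl | (exfalso; (try simp only [true_and, and_true, false_and, and_false, and_self, not_true, not_false_iff] at *); try omega)

lemma smP_entry (hn : 7 ≤ n) (a b : ℕ → F) (i j : Fin n) :
    specialMatrix F n (smPr F n a b) i j =
      if (i:ℕ) = 0 ∧ (j:ℕ) = 3 then a 1 * b 2
      else if (i:ℕ) = 0 ∧ (j:ℕ) = n-1 then
        a 1 * b (n - 3) + a 2 * b (n - 2) + a (n - 3) * b 1 + a (n - 2) * b 2
      else 0 := by
  simp only [specialMatrix, smPr, Matrix.of_apply]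
  split_ifs <;> first | rfl | (exfalso; (try simp only [true_and, and_true, false_and, and_false, and_self, not_true, not_false_iff] at *); try omega)

lemma sm_mul (hn : 7 ≤ n) (a b : ℕ → F) :
    specialMatrix F n a * specialMatrix F n b = specialMatrix F n (smPr F n a b) := by
  ext i j
  rw [Matrix.mul_apply]
  have hsub : ∑ k : Fin n, specialMatrix F n a i k * specialMatrix F n b k j
      = ∑ k ∈ ({⟨0, by omega⟩, ⟨1, by omega⟩, ⟨2, by omega⟩, ⟨n-3, by omega⟩, ⟨n-2, by omega⟩} :
          Finset (Fin n)), specialMatrix F n a i k * specialMatrix F n b k j := by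
    refine (Finset.sum_subset (Finset.subset_univ _) fun k _ hk => ?_).symm
    simp only [Finset.mem_insert, Finset.mem_singleton, Fin.ext_iff, Fin.val_mk] at hk
    push_neg at hk
    rw [smBout hn b k j hk.1 hk.2.1 hk.2.2.1 hk.2.2.2.1 hk.2.2.2.2, mul_zero]
  rw [hsub]
  rw [Finset.sum_insert (by simp [Fin.ext_iff]; omega),
      Finset.sum_insert (by simp [Fin.ext_iff]; omega),
      Finset.sum_insert (by simp [Fin.ext_iff]; omega),
      Finset.sum_insert (by simp [Fin.ext_iff]; omega),
      Finset.sum_singleton]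
  rw [smA0 hn, smA1 hn, smA2 hn, smA3 hn, smA4 hn,
      smB1 hn, smB2 hn, smB3 hn, smB4 hn, zero_mul, smP_entry hn]
  by_cases hi : (i:ℕ) = 0
  · by_cases hj3 : (j:ℕ) = 3
    · have hjn : ¬ (j:ℕ) = n - 1 := by omega
      simp [hi, hj3, hjn]
      split_ifs <;> first | simp | (exfalso; omega)
    · by_cases hjn : (j:ℕ) = n - 1
      · simp only [hi, hj3, hjn, if_true, if_false, and_true, and_false, true_and,
          if_neg (by omega : ¬(n-1 = 3))]
        simp
        ring
      · simp [hi, hj3, hjn]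
  · simp [hi]

lemma sm_add (a b : ℕ → F) :
    specialMatrix F n a + specialMatrix F n b = specialMatrix F n (a + b) := by
  ext i j
  simp only [Matrix.add_apply, specialMatrix, Matrix.of_apply, Pi.add_apply]
  split_ifs <;> simp

lemma sm_smul (c : F) (a : ℕ → F) :
    c • specialMatrix F n a = specialMatrix F n (c • a) := by
  ext i j
  simp only [Matrix.smul_apply, specialMatrix, Matrix.of_apply, Pi.smul_apply]
  split_ifs <;> simp

lemma sm_zero : specialMatrix F n (fun _ => (0:F)) = 0 := by
  ext i j
  simp only [specialMatrix, Matrix.of_apply, Matrix.zero_apply]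
  split_ifs <;> rfl

/-- the set of special matrices as a non-unital subalgebra -/
def smSub (F : Type*) [Field F] {n : ℕ} (hn : 7 ≤ n) :
    NonUnitalSubalgebra F (Matrix (Fin n) (Fin n) F) where
  carrier := Set.range (specialMatrix F n)
  add_mem' := by
    rintro x y ⟨a, rfl⟩ ⟨b, rfl⟩
    exact ⟨a + b, (sm_add a b).symm⟩
  zero_mem' := ⟨fun _ => 0, sm_zero⟩
  mul_mem' := by
    rintro x y ⟨a, rfl⟩ ⟨b, rfl⟩
    exact ⟨smPr F n a b, (sm_mul hn a b).symm⟩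
  smul_mem' := by
    rintro c x ⟨a, rfl⟩
    exact ⟨c • a, (sm_smul c a).symm⟩

lemma sm_adjoin (hn : 7 ≤ n) :
    NonUnitalAlgebra.adjoin F (Set.range (specialMatrix F n)) = smSub F hn :=
  le_antisymm (NonUnitalAlgebra.adjoin_le fun _ hx => hx)
    (fun _ hx => NonUnitalAlgebra.subset_adjoin F hx)

lemma sm_lower (hn : 7 ≤ n) (a : ℕ → F) (i j : Fin n) (hij : (j:ℕ) ≤ (i:ℕ)) :
    specialMatrix F n a i j = 0 := by
  have hi := i.isLt
  have hj := j.isLt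
  simp only [specialMatrix, Matrix.of_apply]
  split_ifs <;> first | rfl | (exfalso; (try simp only [true_and, and_true, false_and, and_false, and_self, not_true, not_false_iff] at *); try omega)

lemma sm_row0 (hn : 7 ≤ n) (a : ℕ → F) (m : ℕ) (h1 : 1 ≤ m) (h2 : m < n) :
    specialMatrix F n a ⟨0, by omega⟩ ⟨m, h2⟩ = a m := by
  simp only [specialMatrix, Matrix.of_apply, Fin.val_mk]
  rw [if_pos ⟨trivial, h1⟩]

lemma sm_ne0 (hn : 7 ≤ n) (c : ℕ → F) (m : ℕ) (h1 : 1 ≤ m) (h2 : m < n) (hcm : c m ≠ 0) :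
    specialMatrix F n c ≠ 0 := by
  intro h
  have he := Matrix.ext_iff.mpr h ⟨0, by omega⟩ ⟨m, h2⟩
  rw [sm_row0 hn c m h1 h2] at he
  exact hcm (by simpa using he)

end Aux

/-- indicator parameter family -/
def smD (F : Type*) [Field F] (m : ℕ) : ℕ → F := fun j => if j = m then 1 else 0

/-- For `n ≥ 7` and a field of characteristic `≠ 2`, the set `S` of all matrices of the above
shape is a non-unital `F`-subalgebra of the strictly upper triangular `n × n` matrices which
is not commutative and is centrally essential. -/
theorem specialMatrices_noncommutative_centrallyEssential
    (F : Type*) [Field F] (hF : ringChar F ≠ 2) (n : ℕ) (hn : 7 ≤ n) :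
    ((NonUnitalAlgebra.adjoin F (Set.range (specialMatrix F n)) :
        Set (Matrix (Fin n) (Fin n) F)) = Set.range (specialMatrix F n)) ∧
    (∀ A ∈ Set.range (specialMatrix F n), ∀ i j : Fin n, j ≤ i → A i j = 0) ∧
    ¬ (∀ a b : NonUnitalAlgebra.adjoin F (Set.range (specialMatrix F n)), a * b = b * a) ∧
    IsCentrallyEssential (NonUnitalAlgebra.adjoin F (Set.range (specialMatrix F n))) := by
  have hadj := sm_adjoin (F := F) hn
  have hmem : ∀ b : NonUnitalAlgebra.adjoin F (Set.range (specialMatrix F n)),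
      ∃ q : ℕ → F, specialMatrix F n q = (b : Matrix (Fin n) (Fin n) F) := by
    intro b
    exact (SetLike.ext_iff.mp hadj ↑b).mp b.2
  -- centrality criterion
  have central : ∀ (x : NonUnitalAlgebra.adjoin F (Set.range (specialMatrix F n))) (c : ℕ → F),
      specialMatrix F n c = (x : Matrix (Fin n) (Fin n) F) → c 1 = 0 → c 2 = 0 →
      ∀ b : NonUnitalAlgebra.adjoin F (Set.range (specialMatrix F n)), x * b = b * x := by
    intro x c hcx h1 h2 b
    obtain ⟨q, hq⟩ := hmem b
    apply Subtype.ext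
    show (x : Matrix (Fin n) (Fin n) F) * b = (b : Matrix (Fin n) (Fin n) F) * x
    rw [← hcx, ← hq, sm_mul hn, sm_mul hn]
    have hpq : smPr F n c q = smPr F n q c := by
      funext j
      simp only [smPr, h1, h2]
      split_ifs <;> ring
    rw [hpq]
  refine ⟨by rw [hadj]; rfl, ?_, ?_, ?_⟩
  · rintro A ⟨a, rfl⟩ i j hij
    exact sm_lower hn a i j hij
  · intro hcomm
    have h1 : specialMatrix F n (smD F 1) ∈
        NonUnitalAlgebra.adjoin F (Set.range (specialMatrix F n)) :=
      NonUnitalAlgebra.subset_adjoin F ⟨smD F 1, rfl⟩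
    have h2 : specialMatrix F n (smD F 2) ∈
        NonUnitalAlgebra.adjoin F (Set.range (specialMatrix F n)) :=
      NonUnitalAlgebra.subset_adjoin F ⟨smD F 2, rfl⟩
    have hE := hcomm ⟨_, h1⟩ ⟨_, h2⟩
    have hval : specialMatrix F n (smD F 1) * specialMatrix F n (smD F 2)
        = specialMatrix F n (smD F 2) * specialMatrix F n (smD F 1) :=
      congrArg Subtype.val hE
    rw [sm_mul hn, sm_mul hn] at hval
    have hE2 := Matrix.ext_iff.mpr hval (⟨0, by omega⟩ : Fin n) (⟨3, by omega⟩ : Fin n)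
    rw [smP_entry hn, smP_entry hn] at hE2
    simp only [Fin.val_mk, and_self, if_pos (⟨rfl, rfl⟩ : (0:ℕ) = 0 ∧ (3:ℕ) = 3)] at hE2
    simp only [smD] at hE2
    norm_num at hE2
  · right
    intro a ha
    obtain ⟨p, hp⟩ := hmem a
    by_cases hc : p 1 = 0 ∧ p 2 = 0
    · exfalso
      exact ha (central a p hp hc.1 hc.2)
    · -- pick the index m for the witness
      by_cases hp1 : p 1 = 0
      · -- then p 2 ≠ 0 ; use c = smD (n-2)
        have hp2 : p 2 ≠ 0 := fun h => hc ⟨hp1, h⟩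
        set c := smD F (n-2) with hcdef
        have hc1 : c 1 = 0 := by simp only [hcdef, smD]; rw [if_neg (by omega)]
        have hc2 : c 2 = 0 := by simp only [hcdef, smD]; rw [if_neg (by omega)]
        have hy1 : smPr F n p c 1 = 0 := by
          simp only [smPr]; rw [if_neg (by omega), if_neg (by omega)]
        have hy2 : smPr F n p c 2 = 0 := by
          simp only [smPr]; rw [if_neg (by omega), if_neg (by omega)]
        refine ⟨⟨specialMatrix F n c, NonUnitalAlgebra.subset_adjoin F ⟨c, rfl⟩⟩,
          ⟨specialMatrix F n (smPr F n p c), NonUnitalAlgebra.subset_adjoin F ⟨_, rfl⟩⟩,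
          central _ c rfl hc1 hc2, central _ (smPr F n p c) rfl hy1 hy2, ?_, ?_, ?_⟩
        · intro h0
          exact sm_ne0 hn c (n-2) (by omega) (by omega)
            (by simp [hcdef, smD])
            (by simpa using Subtype.ext_iff.mp h0)
        · have hv : smPr F n p c (n-1) = p 2 := by
            simp only [smPr, hcdef, smD]
            split_ifs <;> first | ring1 | (exfalso; omega) | (exfalso; simp_all)
          intro h0
          refine sm_ne0 hn (smPr F n p c) (n-1) (by omega) (by omega) ?_
            (by simpa using Subtype.ext_iff.mp h0)
          rw [hv]; exact hp2
        · apply Subtype.ext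
          show (a : Matrix (Fin n) (Fin n) F) * specialMatrix F n c
              = specialMatrix F n (smPr F n p c)
          rw [← hp, sm_mul hn]
      · -- p 1 ≠ 0 ; use c = smD (n-3)
        set c := smD F (n-3) with hcdef
        have hc1 : c 1 = 0 := by simp only [hcdef, smD]; rw [if_neg (by omega)]
        have hc2 : c 2 = 0 := by simp only [hcdef, smD]; rw [if_neg (by omega)]
        have hy1 : smPr F n p c 1 = 0 := by
          simp only [smPr]; rw [if_neg (by omega), if_neg (by omega)]
        have hy2 : smPr F n p c 2 = 0 := by
          simp only [smPr]; rw [if_neg (by omega), if_neg (by omega)]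
        refine ⟨⟨specialMatrix F n c, NonUnitalAlgebra.subset_adjoin F ⟨c, rfl⟩⟩,
          ⟨specialMatrix F n (smPr F n p c), NonUnitalAlgebra.subset_adjoin F ⟨_, rfl⟩⟩,
          central _ c rfl hc1 hc2, central _ (smPr F n p c) rfl hy1 hy2, ?_, ?_, ?_⟩
        · intro h0
          exact sm_ne0 hn c (n-3) (by omega) (by omega)
            (by simp [hcdef, smD])
            (by simpa using Subtype.ext_iff.mp h0)
        · have hv : smPr F n p c (n-1) = p 1 := by
            simp only [smPr, hcdef, smD]
            split_ifs <;> first | ring1 | (exfalso; omega) | (exfalso; simp_all)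
          intro h0
          refine sm_ne0 hn (smPr F n p c) (n-1) (by omega) (by omega) ?_
            (by simpa using Subtype.ext_iff.mp h0)
          rw [hv]; exact hp1
        · apply Subtype.ext
          show (a : Matrix (Fin n) (Fin n) F) * specialMatrix F n c
              = specialMatrix F n (smPr F n p c)
          rw [← hp, sm_mul hn]
end

section
/- Let D be a division ring that is not commutative. Then the ring T₂(D) of upper triangular 2×2 matrices over D is not centrally essential, while its Jacobson radical J(T₂(D)) (the set of strictly upper triangular 2×2 matrices), regarded as a non-unital ring, has zero multiplication and is commutative, hence is centrally essential. -/
/-- The ring `T₂(D)` of upper triangular `2 × 2` matrices over `D`. -/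
def upperTriangularSubring (D : Type*) [Ring D] : Subring (Matrix (Fin 2) (Fin 2) D) where
  carrier := {A | ∀ i j : Fin 2, j < i → A i j = 0}
  mul_mem' := by
    intro A B ha hb i j hij
    rw [Matrix.mul_apply]
    refine Finset.sum_eq_zero fun k _ => ?_
    rcases le_or_gt i k with h | h
    · rw [hb k j (lt_of_lt_of_le hij h), mul_zero]
    · rw [ha i k h, zero_mul]
  one_mem' := by
    intro i j hij
    exact Matrix.one_apply_ne (ne_of_gt hij)
  add_mem' := by
    intro A B ha hb i j hij
    simp [Matrix.add_apply, ha i j hij, hb i j hij]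
  zero_mem' := by
    intro i j hij
    rfl
  neg_mem' := by
    intro A ha i j hij
    simp [Matrix.neg_apply, ha i j hij]

/-- The set of strictly upper triangular `2 × 2` matrices over `D`, as a non-unital ring. -/
def strictUpperTriangularSubring (D : Type*) [Ring D] :
    NonUnitalSubring (Matrix (Fin 2) (Fin 2) D) where
  carrier := {A | ∀ i j : Fin 2, j ≤ i → A i j = 0}
  mul_mem' := by
    intro A B ha hb i j hij
    rw [Matrix.mul_apply]
    refine Finset.sum_eq_zero fun k _ => ?_
    rcases le_or_gt k i with h | h
    · rw [ha i k h, zero_mul]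
    · rw [hb k j (hij.trans h.le), mul_zero]
  add_mem' := by
    intro A B ha hb i j hij
    simp [Matrix.add_apply, ha i j hij, hb i j hij]
  zero_mem' := by
    intro i j hij
    rfl
  neg_mem' := by
    intro A ha i j hij
    simp [Matrix.neg_apply, ha i j hij]

section Aux
variable {D : Type*} [Ring D]

lemma mem_ut_iff {A : Matrix (Fin 2) (Fin 2) D} :
    A ∈ upperTriangularSubring D ↔ A 1 0 = 0 := by
  constructor
  · exact fun h => h 1 0 (by decide)
  · intro h i j hij
    fin_cases i <;> fin_cases j <;> first | exact h | exact absurd hij (by decide)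

lemma mem_sut_iff {A : Matrix (Fin 2) (Fin 2) D} :
    A ∈ strictUpperTriangularSubring D ↔ A 0 0 = 0 ∧ A 1 0 = 0 ∧ A 1 1 = 0 := by
  constructor
  · exact fun h => ⟨h 0 0 (by decide), h 1 0 (by decide), h 1 1 (by decide)⟩
  · rintro ⟨h1, h2, h3⟩ i j hij
    fin_cases i <;> fin_cases j <;>
      first | exact h1 | exact h2 | exact h3 | exact absurd hij (by decide)

variable (D) in
/-- e₁₂ as an element of `T₂(D)`. -/
def utE12 : upperTriangularSubring D := ⟨!![0,1;0,0], mem_ut_iff.mpr (by simp)⟩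

variable (D) in
/-- e₁₁ as an element of `T₂(D)`. -/
def utE11 : upperTriangularSubring D := ⟨!![1,0;0,0], mem_ut_iff.mpr (by simp)⟩

variable (D) in
/-- The maximal left ideal of matrices with zero `(0,0)` entry. -/
def utM1 : Ideal (upperTriangularSubring D) where
  carrier := {a | (a : Matrix (Fin 2) (Fin 2) D) 0 0 = 0}
  add_mem' := by
    intro a b ha hb
    simp only [Set.mem_setOf_eq] at ha hb ⊢
    push_cast
    simp [Matrix.add_apply, ha, hb]
  zero_mem' := rfl
  smul_mem' := by
    intro c x hx
    simp only [Set.mem_setOf_eq] at hx ⊢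
    rw [smul_eq_mul]
    push_cast
    rw [Matrix.mul_apply, Fin.sum_univ_two, hx, mul_zero, mem_ut_iff.mp x.2, mul_zero,
      add_zero]

variable (D) in
/-- The maximal left ideal of matrices with zero `(1,1)` entry. -/
def utM2 : Ideal (upperTriangularSubring D) where
  carrier := {a | (a : Matrix (Fin 2) (Fin 2) D) 1 1 = 0}
  add_mem' := by
    intro a b ha hb
    simp only [Set.mem_setOf_eq] at ha hb ⊢
    push_cast
    simp [Matrix.add_apply, ha, hb]
  zero_mem' := rfl
  smul_mem' := by
    intro c x hx
    simp only [Set.mem_setOf_eq] at hx ⊢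
    rw [smul_eq_mul]
    push_cast
    rw [Matrix.mul_apply, Fin.sum_univ_two, hx, mul_zero, mem_ut_iff.mp c.2, zero_mul,
      add_zero]

end Aux

section AuxDiv
variable {D : Type*} [DivisionRing D]

lemma utM1_isMaximal : (utM1 D).IsMaximal := by
  rw [Ideal.isMaximal_iff]
  refine ⟨?_, ?_⟩
  · show ((1 : upperTriangularSubring D) : Matrix (Fin 2) (Fin 2) D) 0 0 ≠ 0
    push_cast
    simp [Matrix.one_apply]
  · intro J x hIJ hx hxJ
    have h00 : (x : Matrix (Fin 2) (Fin 2) D) 0 0 ≠ 0 := hx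
    set c : upperTriangularSubring D :=
      ⟨!![((x : Matrix (Fin 2) (Fin 2) D) 0 0)⁻¹, 0; 0, 0], mem_ut_iff.mpr (by simp)⟩ with hc
    have hcx : c * x ∈ J := J.mul_mem_left c hxJ
    have h1 : (1 : upperTriangularSubring D) - c * x ∈ utM1 D := by
      show ((1 - c * x : upperTriangularSubring D) : Matrix (Fin 2) (Fin 2) D) 0 0 = 0
      push_cast
      simp [Matrix.sub_apply, Matrix.mul_apply, Matrix.vecMul, dotProduct, Fin.sum_univ_two, Matrix.one_apply, hc,
        inv_mul_cancel₀ h00]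
    have := J.add_mem (hIJ h1) hcx
    simpa using this

lemma utM2_isMaximal : (utM2 D).IsMaximal := by
  rw [Ideal.isMaximal_iff]
  refine ⟨?_, ?_⟩
  · show ((1 : upperTriangularSubring D) : Matrix (Fin 2) (Fin 2) D) 1 1 ≠ 0
    push_cast
    simp [Matrix.one_apply]
  · intro J x hIJ hx hxJ
    have h11 : (x : Matrix (Fin 2) (Fin 2) D) 1 1 ≠ 0 := hx
    set c : upperTriangularSubring D :=
      ⟨!![0, 0; 0, ((x : Matrix (Fin 2) (Fin 2) D) 1 1)⁻¹], mem_ut_iff.mpr (by simp)⟩ with hc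
    have hcx : c * x ∈ J := J.mul_mem_left c hxJ
    have h1 : (1 : upperTriangularSubring D) - c * x ∈ utM2 D := by
      show ((1 - c * x : upperTriangularSubring D) : Matrix (Fin 2) (Fin 2) D) 1 1 = 0
      push_cast
      simp [Matrix.sub_apply, Matrix.mul_apply, Matrix.vecMul, dotProduct, Fin.sum_univ_two, Matrix.one_apply, hc,
        inv_mul_cancel₀ h11]
    have := J.add_mem (hIJ h1) hcx
    simpa using this

end AuxDiv
/-- For a non-commutative division ring `D`, the ring `T₂(D)` of upper triangular `2 × 2`
matrices is not centrally essential, while its Jacobson radical (which is the set of strictly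
upper triangular matrices), regarded as a non-unital ring, has zero multiplication and is
commutative, hence is centrally essential. -/
theorem upperTriangular2_not_centrallyEssential_but_jacobson_centrallyEssential
    (D : Type*) [DivisionRing D] (hD : ¬ (∀ a b : D, a * b = b * a)) :
    ¬ IsCentrallyEssential (upperTriangularSubring D) ∧
    (∀ x : upperTriangularSubring D,
      x ∈ Ideal.jacobson (⊥ : Ideal (upperTriangularSubring D)) ↔
        (x : Matrix (Fin 2) (Fin 2) D) ∈ strictUpperTriangularSubring D) ∧
    (∀ a b : strictUpperTriangularSubring D, a * b = 0) ∧
    (∀ a b : strictUpperTriangularSubring D, a * b = b * a) ∧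
    IsCentrallyEssential (strictUpperTriangularSubring D) := by
  have h3 : ∀ a b : strictUpperTriangularSubring D, a * b = 0 := by
    intro a b
    obtain ⟨a00, a10, a11⟩ := mem_sut_iff.mp a.2
    obtain ⟨b00, b10, b11⟩ := mem_sut_iff.mp b.2
    refine Subtype.ext ?_
    push_cast
    ext i k
    fin_cases i <;> fin_cases k <;>
      simp [Matrix.mul_apply, Fin.sum_univ_two, a00, a10, a11, b10, b11]
  refine ⟨?_, ?_, h3, fun a b => by rw [h3, h3], Or.inl fun a b => by rw [h3, h3]⟩
  · -- not centrally essential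
    intro h
    have hne : ¬ ∀ b, utE12 D * b = b * utE12 D := by
      intro hc
      have hm := congrArg Subtype.val (hc (utE11 D))
      push_cast at hm
      have h01 := congrFun (congrFun hm 0) 1
      simp [utE11, utE12, Matrix.mul_apply, Fin.sum_univ_two] at h01
    cases h with
    | inl hc => exact hne fun b => hc _ b
    | inr h =>
      obtain ⟨xc, y, hx, hy, hx0, hy0, hxy⟩ := h (utE12 D) hne
      apply hy0
      have h1 := congrArg Subtype.val (hy (utE11 D))
      have h2 := congrArg Subtype.val (hy (utE12 D))
      have hm := congrArg Subtype.val hxy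
      push_cast at h1 h2 hm
      have e01 := congrFun (congrFun h1 0) 1
      have e0011 := congrFun (congrFun h2 0) 1
      have e00 := congrFun (congrFun hm 0) 0
      simp [utE11, utE12, Matrix.mul_apply, Fin.sum_univ_two,
        mem_ut_iff.mp xc.2] at e01 e0011 e00
      have ey01 : (y : Matrix (Fin 2) (Fin 2) D) 0 1 = 0 := e01.symm
      have ey00 : (y : Matrix (Fin 2) (Fin 2) D) 0 0 = 0 := e00.symm
      have ey11 : (y : Matrix (Fin 2) (Fin 2) D) 1 1 = 0 := e0011.symm.trans ey00
      refine Subtype.ext ?_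
      push_cast
      ext i k
      fin_cases i <;> fin_cases k <;>
        simp [mem_ut_iff.mp y.2, ey01, ey00, ey11]
  · -- Jacobson radical
    intro x
    constructor
    · intro hx
      rw [Ideal.jacobson] at hx
      have hm1 : x ∈ utM1 D := Ideal.mem_sInf.mp hx ⟨bot_le, utM1_isMaximal⟩
      have hm2 : x ∈ utM2 D := Ideal.mem_sInf.mp hx ⟨bot_le, utM2_isMaximal⟩
      exact mem_sut_iff.mpr ⟨hm1, mem_ut_iff.mp x.2, hm2⟩
    · intro hx
      obtain ⟨h00, h10, h11⟩ := mem_sut_iff.mp hx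
      rw [Ideal.jacobson, Ideal.mem_sInf]
      rintro J ⟨-, hJ⟩
      have he12 : utE12 D ∈ J := by
        by_contra he
        obtain ⟨h1J, hmax⟩ := Ideal.isMaximal_iff.mp hJ
        have h1 : (1 : upperTriangularSubring D) ∈ J ⊔ Ideal.span {utE12 D} :=
          hmax _ (utE12 D) le_sup_left he (Submodule.mem_sup_right (Ideal.subset_span rfl))
        obtain ⟨j, hjJ, s, hs, hjs⟩ := Submodule.mem_sup.mp h1
        obtain ⟨c, hcs⟩ := Submodule.mem_span_singleton.mp hs
        have hj : j = 1 - c * utE12 D := by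
          rw [← hjs, ← hcs, smul_eq_mul, add_sub_cancel_right]
        set u : upperTriangularSubring D :=
          ⟨!![1, (c : Matrix (Fin 2) (Fin 2) D) 0 0; 0, 1], mem_ut_iff.mpr (by simp)⟩ with hu
        have huj : u * j = 1 := by
          rw [hj]
          refine Subtype.ext ?_
          push_cast
          ext i k
          fin_cases i <;> fin_cases k <;>
            simp [hu, utE12, Matrix.mul_apply, Matrix.sub_apply, Matrix.one_apply,
              Fin.sum_univ_two, mem_ut_iff.mp c.2]
        exact h1J (huj ▸ J.mul_mem_left u hjJ)
      have hx12 : (⟨!![(x : Matrix (Fin 2) (Fin 2) D) 0 1, 0; 0, 0],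
          mem_ut_iff.mpr (by simp)⟩ : upperTriangularSubring D) * utE12 D = x := by
        refine Subtype.ext ?_
        push_cast
        ext i k
        fin_cases i <;> fin_cases k <;>
          simp [utE12, Matrix.mul_apply, Fin.sum_univ_two, h00, h10, h11]
      exact hx12 ▸ J.mul_mem_left _ he12
end

section
/- Let F be a field of characteristic ≠ 2 and let S be a centrally essential non-unital F-algebra in which every element a satisfies a² = 0. Then S is commutative. -/
/-- Over a field of characteristic `≠ 2`, a centrally essential non-unital `F`-algebra in
which every element has square zero is commutative. -/
theorem commutative_of_centrallyEssential_of_sq_eq_zero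
    (F : Type*) [Field F] (hF : ringChar F ≠ 2)
    (S : Type*) [NonUnitalRing S] [Module F S]
    [SMulCommClass F S S] [IsScalarTower F S S]
    (hce : IsCentrallyEssential S) (hsq : ∀ a : S, a * a = 0) :
    ∀ a b : S, a * b = b * a := by
  have h2 : (2 : F) ≠ 0 := Ring.two_ne_zero hF
  -- anticommutativity: a*b + b*a = 0
  have hanti : ∀ a b : S, a * b + b * a = 0 := by
    intro a b
    have := hsq (a + b)
    rw [add_mul, mul_add, mul_add, hsq a, hsq b, zero_add, add_zero] at this
    exact (add_comm (b * a) (a * b)) ▸ this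
  have hdouble : ∀ s : S, s + s = 0 → s = 0 := by
    intro s hs
    have h2s : (2 : F) • s = 0 := by
      rw [two_smul]; exact hs
    have := congrArg (fun t => (2 : F)⁻¹ • t) h2s
    simpa [smul_smul, inv_mul_cancel₀ h2, one_smul] using this
  rcases hce with h | h
  · exact h
  · intro a b
    by_contra hab
    have hna : ¬ (∀ c : S, a * c = c * a) := fun hc => hab (hc b)
    obtain ⟨x, y, hx, _, _, hy0, haxy⟩ := h a hna
    have h1 : a * x = x * a := (hx a).symm
    have h2' : a * x + x * a = 0 := hanti a x
    have : a * x = 0 := hdouble _ (by rw [h1] at h2' ⊢; exact h2')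
    exact hy0 (haxy ▸ this)
end
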